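/- arXiv:1309.4278 — 8 statements merged into one kernel-verified Lean document; each statement's English description precedes it below -/
import Mathlib

section
/- Let ω : ℂ → ℝ be a smooth solution of the sinh-Gordon equation 8·ω_{zz̄} + sinh(2ω) = 0 on ℂ. Then the function u = ω_{zzz} − 2·(ω_z)³ (a smooth complex-valued function on ℂ) solves the linearized sinh-Gordon equation 4·u_{zz̄} + u·cosh(2ω) = 0 on ℂ. -/
open Complex

/-- The Wirtinger derivative `∂f/∂z = (1/2)(∂f/∂x - i ∂f/∂y)` of a function `f : ℂ → ℂ`. -/
noncomputable def wirtingerZ (f : ℂ → ℂ) (z : ℂ) : ℂ :=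
  (1 / 2) * (fderiv ℝ f z 1 - Complex.I * fderiv ℝ f z Complex.I)

/-- The Wirtinger derivative `∂f/∂z̄ = (1/2)(∂f/∂x + i ∂f/∂y)` of a function `f : ℂ → ℂ`. -/
noncomputable def wirtingerZbar (f : ℂ → ℂ) (z : ℂ) : ℂ :=
  (1 / 2) * (fderiv ℝ f z 1 + Complex.I * fderiv ℝ f z Complex.I)

variable {f g : ℂ → ℂ} {z v w : ℂ}

lemma top_le' : ((2:WithTop ℕ∞)) ≤ ((⊤ : ℕ∞) : WithTop ℕ∞) := by
  rw [show ((2:WithTop ℕ∞)) = ((2:ℕ∞) : WithTop ℕ∞) by rfl]; exact_mod_cast le_top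

variable {f g : ℂ → ℂ} {z v w : ℂ}

lemma hasFDerivAt_dir (hf : ContDiff ℝ (⊤ : ℕ∞) f) (v z : ℂ) :
    HasFDerivAt (fun x => fderiv ℝ f x v)
      ((ContinuousLinearMap.apply ℝ ℂ v).comp (fderiv ℝ (fderiv ℝ f) z)) z := by
  have h1 : HasFDerivAt (fderiv ℝ f) (fderiv ℝ (fderiv ℝ f) z) z :=
    (((hf.fderiv_right (m := (⊤:ℕ∞)) (by exact_mod_cast le_rfl)).differentiable (by simp)) z).hasFDerivAt
  exact (ContinuousLinearMap.apply ℝ ℂ v).hasFDerivAt.comp z h1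

lemma fderiv_dir (hf : ContDiff ℝ (⊤ : ℕ∞) f) (v z w : ℂ) :
    fderiv ℝ (fun x => fderiv ℝ f x v) z w = fderiv ℝ (fderiv ℝ f) z w v := by
  rw [(hasFDerivAt_dir hf v z).fderiv]; rfl

lemma contDiff_dir (hf : ContDiff ℝ (⊤ : ℕ∞) f) (v : ℂ) :
    ContDiff ℝ (⊤ : ℕ∞) (fun x => fderiv ℝ f x v) :=
  (ContinuousLinearMap.apply ℝ ℂ v).contDiff.comp (hf.fderiv_right (m := (⊤:ℕ∞)) (by exact_mod_cast le_rfl))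

lemma contDiff_wz (hf : ContDiff ℝ (⊤ : ℕ∞) f) : ContDiff ℝ (⊤ : ℕ∞) (wirtingerZ f) := by
  unfold wirtingerZ
  exact contDiff_const.mul ((contDiff_dir hf 1).sub (contDiff_const.mul (contDiff_dir hf I)))

lemma contDiff_wzb (hf : ContDiff ℝ (⊤ : ℕ∞) f) : ContDiff ℝ (⊤ : ℕ∞) (wirtingerZbar f) := by
  unfold wirtingerZbar
  exact contDiff_const.mul ((contDiff_dir hf 1).add (contDiff_const.mul (contDiff_dir hf I)))

lemma fderiv_wz (hf : ContDiff ℝ (⊤ : ℕ∞) f) (z w : ℂ) :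
    fderiv ℝ (wirtingerZ f) z w
      = (1/2) * (fderiv ℝ (fderiv ℝ f) z w 1 - I * fderiv ℝ (fderiv ℝ f) z w I) := by
  have h : HasFDerivAt (wirtingerZ f)
      (((1:ℂ)/2) • (((ContinuousLinearMap.apply ℝ ℂ 1).comp (fderiv ℝ (fderiv ℝ f) z))
        - (I : ℂ) • ((ContinuousLinearMap.apply ℝ ℂ I).comp (fderiv ℝ (fderiv ℝ f) z)))) z := by
    exact ((hasFDerivAt_dir hf 1 z).sub ((hasFDerivAt_dir hf I z).const_mul I)).const_mul _
  rw [h.fderiv]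
  simp [smul_eq_mul]

lemma fderiv_wzb (hf : ContDiff ℝ (⊤ : ℕ∞) f) (z w : ℂ) :
    fderiv ℝ (wirtingerZbar f) z w
      = (1/2) * (fderiv ℝ (fderiv ℝ f) z w 1 + I * fderiv ℝ (fderiv ℝ f) z w I) := by
  have h : HasFDerivAt (wirtingerZbar f)
      (((1:ℂ)/2) • (((ContinuousLinearMap.apply ℝ ℂ 1).comp (fderiv ℝ (fderiv ℝ f) z))
        + (I : ℂ) • ((ContinuousLinearMap.apply ℝ ℂ I).comp (fderiv ℝ (fderiv ℝ f) z)))) z := by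
    exact ((hasFDerivAt_dir hf 1 z).add ((hasFDerivAt_dir hf I z).const_mul I)).const_mul _
  rw [h.fderiv]
  simp [smul_eq_mul]
  ring

lemma wz_wzb_comm (hf : ContDiff ℝ (⊤ : ℕ∞) f) (z : ℂ) :
    wirtingerZbar (wirtingerZ f) z = wirtingerZ (wirtingerZbar f) z := by
  have hs : IsSymmSndFDerivAt ℝ f z := hf.contDiffAt.isSymmSndFDerivAt (by simpa using top_le')
  simp only [wirtingerZ, wirtingerZbar, fderiv_wz hf, fderiv_wzb hf]
  rw [hs.eq 1 I]
  ring

lemma h1top' : (1:WithTop ℕ∞) ≤ ((⊤:ℕ∞):WithTop ℕ∞) := by exact_mod_cast le_top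

lemma dAt {f : ℂ → ℂ} (hf : ContDiff ℝ (⊤ : ℕ∞) f) (z : ℂ) : DifferentiableAt ℝ f z :=
  (hf.differentiable (by simp)).differentiableAt

lemma wz_sub (hf : DifferentiableAt ℝ f z) (hg : DifferentiableAt ℝ g z) :
    wirtingerZ (fun x => f x - g x) z = wirtingerZ f z - wirtingerZ g z := by
  unfold wirtingerZ; rw [fderiv_fun_sub hf hg]; simp; ring

lemma wzb_sub (hf : DifferentiableAt ℝ f z) (hg : DifferentiableAt ℝ g z) :
    wirtingerZbar (fun x => f x - g x) z = wirtingerZbar f z - wirtingerZbar g z := by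
  unfold wirtingerZbar; rw [fderiv_fun_sub hf hg]; simp; ring

lemma wz_const_mul (hf : DifferentiableAt ℝ f z) (c : ℂ) :
    wirtingerZ (fun x => c * f x) z = c * wirtingerZ f z := by
  unfold wirtingerZ; rw [fderiv_const_mul hf]; simp [smul_eq_mul]; ring

lemma wzb_const_mul (hf : DifferentiableAt ℝ f z) (c : ℂ) :
    wirtingerZbar (fun x => c * f x) z = c * wirtingerZbar f z := by
  unfold wirtingerZbar; rw [fderiv_const_mul hf]; simp [smul_eq_mul]; ring

lemma wz_mul (hf : DifferentiableAt ℝ f z) (hg : DifferentiableAt ℝ g z) :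
    wirtingerZ (fun x => f x * g x) z = wirtingerZ f z * g z + f z * wirtingerZ g z := by
  unfold wirtingerZ; rw [fderiv_fun_mul hf hg]; simp [smul_eq_mul]; ring

lemma wzb_mul (hf : DifferentiableAt ℝ f z) (hg : DifferentiableAt ℝ g z) :
    wirtingerZbar (fun x => f x * g x) z
      = wirtingerZbar f z * g z + f z * wirtingerZbar g z := by
  unfold wirtingerZbar; rw [fderiv_fun_mul hf hg]; simp [smul_eq_mul]; ring

lemma wz_comp {h : ℂ → ℂ} {h' : ℂ} (hh : HasDerivAt h h' (f z))
    (hf : DifferentiableAt ℝ f z) :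
    wirtingerZ (fun x => h (f x)) z = h' * wirtingerZ f z := by
  have H : HasFDerivAt (fun x => h (f x))
      (((ContinuousLinearMap.smulRight (1 : ℂ →L[ℂ] ℂ) h').restrictScalars ℝ).comp
        (fderiv ℝ f z)) z :=
    (hh.hasFDerivAt.restrictScalars ℝ).comp z hf.hasFDerivAt
  unfold wirtingerZ; rw [H.fderiv]; simp [smul_eq_mul]; ring

lemma wzb_comp {h : ℂ → ℂ} {h' : ℂ} (hh : HasDerivAt h h' (f z))
    (hf : DifferentiableAt ℝ f z) :
    wirtingerZbar (fun x => h (f x)) z = h' * wirtingerZbar f z := by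
  have H : HasFDerivAt (fun x => h (f x))
      (((ContinuousLinearMap.smulRight (1 : ℂ →L[ℂ] ℂ) h').restrictScalars ℝ).comp
        (fderiv ℝ f z)) z :=
    (hh.hasFDerivAt.restrictScalars ℝ).comp z hf.hasFDerivAt
  unfold wirtingerZbar; rw [H.fderiv]; simp [smul_eq_mul]; ring

lemma wz_sinh (hf : DifferentiableAt ℝ f z) :
    wirtingerZ (fun x => Complex.sinh (f x)) z = Complex.cosh (f z) * wirtingerZ f z :=
  wz_comp (Complex.hasDerivAt_sinh (f z)) hf

lemma wz_cosh (hf : DifferentiableAt ℝ f z) :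
    wirtingerZ (fun x => Complex.cosh (f x)) z = Complex.sinh (f z) * wirtingerZ f z :=
  wz_comp (Complex.hasDerivAt_cosh (f z)) hf

lemma wzb_cube (hf : DifferentiableAt ℝ f z) :
    wirtingerZbar (fun x => (f x)^3) z = 3 * (f z)^2 * wirtingerZbar f z := by
  have e : (fun x => (f x)^3) = fun x => f x * (f x * f x) := by funext x; ring
  rw [e, wzb_mul hf (hf.fun_mul hf), wzb_mul hf hf]; ring

lemma wz_sq (hf : DifferentiableAt ℝ f z) :
    wirtingerZ (fun x => (f x)^2) z = 2 * f z * wirtingerZ f z := by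
  have e : (fun x => (f x)^2) = fun x => f x * f x := by funext x; ring
  rw [e, wz_mul hf hf]; ring

lemma main_aux (g : ℂ → ℂ) (hg : ContDiff ℝ (⊤ : ℕ∞) g)
    (hsg : ∀ z : ℂ, 8 * wirtingerZbar (wirtingerZ g) z + Complex.sinh (2 * g z) = 0) :
    ∀ z : ℂ,
      4 * wirtingerZbar (wirtingerZ (fun w =>
            wirtingerZ (wirtingerZ (wirtingerZ g)) w - 2 * (wirtingerZ g w) ^ 3)) z
        + (wirtingerZ (wirtingerZ (wirtingerZ g)) z - 2 * (wirtingerZ g z) ^ 3)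
          * Complex.cosh (2 * g z) = 0 := by
  intro z
  set a := wirtingerZ g with haD
  set b := wirtingerZ a with hbD
  set c := wirtingerZ b with hcD
  have hga : ContDiff ℝ (⊤ : ℕ∞) a := contDiff_wz hg
  have hgb : ContDiff ℝ (⊤ : ℕ∞) b := contDiff_wz hga
  have hgc : ContDiff ℝ (⊤ : ℕ∞) c := contDiff_wz hgb
  have hu : ContDiff ℝ (⊤ : ℕ∞) (fun w => c w - 2 * (a w) ^ 3) :=
    hgc.sub (contDiff_const.mul (hga.pow 3))
  have d2g : ∀ x : ℂ, DifferentiableAt ℝ (fun y => 2 * g y) x := fun x => (dAt hg x).const_mul 2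
  have dsinh2g : ∀ x : ℂ, DifferentiableAt ℝ (fun y => Complex.sinh (2 * g y)) x := fun x =>
    (Complex.differentiable_sinh.differentiableAt.restrictScalars ℝ).comp x (d2g x)
  have dcosh2g : ∀ x : ℂ, DifferentiableAt ℝ (fun y => Complex.cosh (2 * g y)) x := fun x =>
    (Complex.differentiable_cosh.differentiableAt.restrictScalars ℝ).comp x (d2g x)
  have hA : wirtingerZbar a = fun x => -(1/8) * Complex.sinh (2 * g x) := by
    funext x
    have h := hsg x
    linear_combination (1/8 : ℂ) * h
  have hB : wirtingerZbar b = fun x => -(1/4) * (Complex.cosh (2 * g x) * a x) := by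
    funext x
    rw [hbD, wz_wzb_comm hga x, hA]
    rw [wz_const_mul (dsinh2g x) (-(1/8))]
    rw [wz_sinh (d2g x)]
    rw [wz_const_mul (dAt hg x) 2]
    rw [← haD]
    ring
  have hC : wirtingerZbar c
      = fun x => -(1/2) * (Complex.sinh (2 * g x) * (a x)^2)
          - (1/4) * (Complex.cosh (2 * g x) * b x) := by
    funext x
    rw [hcD, wz_wzb_comm hgb x, hB]
    rw [wz_const_mul ((dcosh2g x).fun_mul (dAt hga x)) (-(1/4))]
    rw [wz_mul (dcosh2g x) (dAt hga x)]
    rw [wz_cosh (d2g x)]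
    rw [wz_const_mul (dAt hg x) 2]
    rw [← haD, ← hbD]
    ring
  have hu_bar : wirtingerZbar (fun w => c w - 2 * (a w) ^ 3)
      = fun x => (1/4) * (Complex.sinh (2 * g x) * (a x)^2)
          - (1/4) * (Complex.cosh (2 * g x) * b x) := by
    funext x
    rw [wzb_sub (dAt hgc x) (((dAt hga x).fun_pow 3).const_mul 2)]
    rw [wzb_const_mul ((dAt hga x).fun_pow 3) 2]
    rw [wzb_cube (dAt hga x)]
    rw [hC, hA]
    ring
  rw [wz_wzb_comm hu z, hu_bar]
  rw [wz_sub (((dsinh2g z).fun_mul ((dAt hga z).fun_pow 2)).const_mul (1/4))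
      (((dcosh2g z).fun_mul (dAt hgb z)).const_mul (1/4))]
  rw [wz_const_mul ((dsinh2g z).fun_mul ((dAt hga z).fun_pow 2)) (1/4)]
  rw [wz_const_mul ((dcosh2g z).fun_mul (dAt hgb z)) (1/4)]
  rw [wz_mul (dsinh2g z) ((dAt hga z).fun_pow 2)]
  rw [wz_mul (dcosh2g z) (dAt hgb z)]
  rw [wz_sq (dAt hga z)]
  rw [wz_sinh (d2g z)]
  rw [wz_cosh (d2g z)]
  rw [wz_const_mul (dAt hg z) 2]
  rw [← haD, ← hbD, ← hcD]
  ring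

/-- If `ω : ℂ → ℝ` is a smooth solution of the sinh-Gordon equation
`8 ω_{zz̄} + sinh(2ω) = 0`, then `u = ω_{zzz} - 2 (ω_z)³` solves the linearized
sinh-Gordon equation `4 u_{zz̄} + u cosh(2ω) = 0`. -/
theorem pinkall_sterling_second_jacobi_field (ω : ℂ → ℝ)
    (hω : ContDiff ℝ (⊤ : ℕ∞) ω)
    (hsg : ∀ z : ℂ,
      8 * wirtingerZbar (wirtingerZ (fun w => (ω w : ℂ))) z
        + Complex.sinh (2 * (ω z : ℂ)) = 0) :
    ∀ z : ℂ,
      4 * wirtingerZbar (wirtingerZ (fun w =>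
            wirtingerZ (wirtingerZ (wirtingerZ (fun v => (ω v : ℂ)))) w
              - 2 * (wirtingerZ (fun v => (ω v : ℂ)) w) ^ 3)) z
        + (wirtingerZ (wirtingerZ (wirtingerZ (fun v => (ω v : ℂ)))) z
              - 2 * (wirtingerZ (fun v => (ω v : ℂ)) z) ^ 3)
          * Complex.cosh (2 * (ω z : ℂ)) = 0 :=
  main_aux (fun v => (ω v : ℂ)) (Complex.ofRealCLM.contDiff.comp hω) hsg
end

section
/- Let ω : ℂ → ℝ be smooth, and for each λ ∈ ℂ \ {0} define smooth matrix-valued functions A_λ, B_λ : ℂ → M₂(ℂ) by A_λ = (1/4)·[[2ω_z, i·λ⁻¹·e^ω], [i·e^{−ω}, −2ω_z]] and B_λ = (1/4)·[[−2ω_{z̄}, i·e^{−ω}], [i·λ·e^ω, 2ω_{z̄}]]. Then ω satisfies the sinh-Gordon equation 8·ω_{zz̄} + sinh(2ω) = 0 on ℂ if and only if for every λ ∈ ℂ \ {0} the zero-curvature (Maurer–Cartan) equation ∂_{z̄}A_λ − ∂_z B_λ = A_λ·B_λ − B_λ·A_λ holds at every point of ℂ. -/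
open Complex Matrix

/-- The `dz`-coefficient `A_λ` of the 1-form `α_λ` associated to `ω`. -/
noncomputable def Amat (ω : ℂ → ℝ) (l : ℂ) (z : ℂ) : Matrix (Fin 2) (Fin 2) ℂ :=
  (1 / 4 : ℂ) • !![2 * wirtingerZ (fun w => (ω w : ℂ)) z,
                   Complex.I * l⁻¹ * Complex.exp (ω z);
                   Complex.I * Complex.exp (-(ω z : ℂ)),
                   -(2 * wirtingerZ (fun w => (ω w : ℂ)) z)]

/-- The `dz̄`-coefficient `B_λ` of the 1-form `α_λ` associated to `ω`. -/
noncomputable def Bmat (ω : ℂ → ℝ) (l : ℂ) (z : ℂ) : Matrix (Fin 2) (Fin 2) ℂ :=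
  (1 / 4 : ℂ) • !![-(2 * wirtingerZbar (fun w => (ω w : ℂ)) z),
                   Complex.I * Complex.exp (-(ω z : ℂ));
                   Complex.I * l * Complex.exp (ω z),
                   2 * wirtingerZbar (fun w => (ω w : ℂ)) z]

lemma wZ_const_mul (f : ℂ → ℂ) (c z : ℂ) (hf : DifferentiableAt ℝ f z) :
    wirtingerZ (fun w => c * f w) z = c * wirtingerZ f z := by
  unfold wirtingerZ
  rw [fderiv_const_mul hf c]
  simp [smul_eq_mul]
  ring

lemma wZbar_const_mul (f : ℂ → ℂ) (c z : ℂ) (hf : DifferentiableAt ℝ f z) :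
    wirtingerZbar (fun w => c * f w) z = c * wirtingerZbar f z := by
  unfold wirtingerZbar
  rw [fderiv_const_mul hf c]
  simp [smul_eq_mul]
  ring


lemma wZ_exp (f : ℂ → ℂ) (z : ℂ) (hf : DifferentiableAt ℝ f z) :
    wirtingerZ (fun w => Complex.exp (f w)) z = Complex.exp (f z) * wirtingerZ f z := by
  have h : HasFDerivAt (fun w => Complex.exp (f w))
      ((((ContinuousLinearMap.smulRight (1 : ℂ →L[ℂ] ℂ) (Complex.exp (f z))).restrictScalars
        ℝ)).comp (fderiv ℝ f z)) z :=
    ((Complex.hasDerivAt_exp (f z)).hasFDerivAt.restrictScalars ℝ).comp z hf.hasFDerivAt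
  unfold wirtingerZ
  rw [h.fderiv]
  simp [smul_eq_mul]
  ring

lemma wZbar_exp (f : ℂ → ℂ) (z : ℂ) (hf : DifferentiableAt ℝ f z) :
    wirtingerZbar (fun w => Complex.exp (f w)) z = Complex.exp (f z) * wirtingerZbar f z := by
  have h : HasFDerivAt (fun w => Complex.exp (f w))
      ((((ContinuousLinearMap.smulRight (1 : ℂ →L[ℂ] ℂ) (Complex.exp (f z))).restrictScalars
        ℝ)).comp (fderiv ℝ f z)) z :=
    ((Complex.hasDerivAt_exp (f z)).hasFDerivAt.restrictScalars ℝ).comp z hf.hasFDerivAt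
  unfold wirtingerZbar
  rw [h.fderiv]
  simp [smul_eq_mul]
  ring

lemma wZ_neg (f : ℂ → ℂ) (z : ℂ) :
    wirtingerZ (fun w => -(f w)) z = -wirtingerZ f z := by
  unfold wirtingerZ; rw [fderiv_fun_neg]; simp; ring

lemma wZbar_neg (f : ℂ → ℂ) (z : ℂ) :
    wirtingerZbar (fun w => -(f w)) z = -wirtingerZbar f z := by
  unfold wirtingerZbar; rw [fderiv_fun_neg]; simp; ring

lemma contDiff_wZ (f : ℂ → ℂ) (hf : ContDiff ℝ (⊤ : ℕ∞) f) :
    ContDiff ℝ (⊤ : ℕ∞) (wirtingerZ f) := by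
  have hF : ContDiff ℝ (⊤ : ℕ∞) (fderiv ℝ f) := hf.fderiv_right (by simp)
  have h1 : ContDiff ℝ (⊤ : ℕ∞) (fun w => fderiv ℝ f w 1) := hF.clm_apply contDiff_const
  have h2 : ContDiff ℝ (⊤ : ℕ∞) (fun w => fderiv ℝ f w Complex.I) := hF.clm_apply contDiff_const
  exact contDiff_const.mul (h1.sub (contDiff_const.mul h2))

lemma contDiff_wZbar (f : ℂ → ℂ) (hf : ContDiff ℝ (⊤ : ℕ∞) f) :
    ContDiff ℝ (⊤ : ℕ∞) (wirtingerZbar f) := by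
  have hF : ContDiff ℝ (⊤ : ℕ∞) (fderiv ℝ f) := hf.fderiv_right (by simp)
  have h1 : ContDiff ℝ (⊤ : ℕ∞) (fun w => fderiv ℝ f w 1) := hF.clm_apply contDiff_const
  have h2 : ContDiff ℝ (⊤ : ℕ∞) (fun w => fderiv ℝ f w Complex.I) := hF.clm_apply contDiff_const
  exact contDiff_const.mul (h1.add (contDiff_const.mul h2))

lemma fderiv_eval (f : ℂ → ℂ) (hf : ContDiff ℝ (⊤ : ℕ∞) f) (v z u : ℂ) :
    fderiv ℝ (fun w => fderiv ℝ f w v) z u = fderiv ℝ (fderiv ℝ f) z u v := by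
  have hF : ContDiff ℝ (⊤ : ℕ∞) (fderiv ℝ f) := hf.fderiv_right (by simp)
  rw [fderiv_clm_apply (hF.differentiable (by simp) z) (differentiableAt_const v)]
  simp

lemma wirtinger_symm (f : ℂ → ℂ) (hf : ContDiff ℝ (⊤ : ℕ∞) f) (z : ℂ) :
    wirtingerZ (wirtingerZbar f) z = wirtingerZbar (wirtingerZ f) z := by
  have hF : ContDiff ℝ (⊤ : ℕ∞) (fderiv ℝ f) := hf.fderiv_right (by simp)
  have hd : ∀ y, HasFDerivAt f (fderiv ℝ f y) y := fun y =>
    (hf.differentiable (by simp) y).hasFDerivAt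
  have hd2 : HasFDerivAt (fderiv ℝ f) (fderiv ℝ (fderiv ℝ f) z) z :=
    (hF.differentiable (by simp) z).hasFDerivAt
  have symm := second_derivative_symmetric hd hd2
  have e1 : ∀ v : ℂ, DifferentiableAt ℝ (fun w => fderiv ℝ f w v) z := fun v =>
    (hF.differentiable (by simp) z).clm_apply (differentiableAt_const v)
  have key : ∀ u : ℂ, fderiv ℝ (wirtingerZ f) z u
      = (1/2) * (fderiv ℝ (fderiv ℝ f) z u 1
        - Complex.I * fderiv ℝ (fderiv ℝ f) z u Complex.I) := by
    intro u
    have : wirtingerZ f = fun w => (1/2 : ℂ) * ((fun w => fderiv ℝ f w 1) w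
        - Complex.I * (fun w => fderiv ℝ f w Complex.I) w) := rfl
    rw [this, fderiv_const_mul (((e1 1).fun_sub ((e1 Complex.I).const_mul Complex.I)))]
    rw [ContinuousLinearMap.smul_apply]
    rw [fderiv_fun_sub (e1 1) ((e1 Complex.I).const_mul Complex.I)]
    rw [fderiv_const_mul (e1 Complex.I)]
    simp [smul_eq_mul, fderiv_eval f hf 1 z u, fderiv_eval f hf Complex.I z u]
  have keyb : ∀ u : ℂ, fderiv ℝ (wirtingerZbar f) z u
      = (1/2) * (fderiv ℝ (fderiv ℝ f) z u 1
        + Complex.I * fderiv ℝ (fderiv ℝ f) z u Complex.I) := by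
    intro u
    have : wirtingerZbar f = fun w => (1/2 : ℂ) * ((fun w => fderiv ℝ f w 1) w
        + Complex.I * (fun w => fderiv ℝ f w Complex.I) w) := rfl
    rw [this, fderiv_const_mul (((e1 1).fun_add ((e1 Complex.I).const_mul Complex.I)))]
    rw [ContinuousLinearMap.smul_apply]
    rw [fderiv_fun_add (e1 1) ((e1 Complex.I).const_mul Complex.I)]
    rw [fderiv_const_mul (e1 Complex.I)]
    simp [smul_eq_mul, fderiv_eval f hf 1 z u, fderiv_eval f hf Complex.I z u]
  have lhs : wirtingerZ (wirtingerZbar f) z = (1/2) * (fderiv ℝ (wirtingerZbar f) z 1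
      - Complex.I * fderiv ℝ (wirtingerZbar f) z Complex.I) := rfl
  have rhs : wirtingerZbar (wirtingerZ f) z = (1/2) * (fderiv ℝ (wirtingerZ f) z 1
      + Complex.I * fderiv ℝ (wirtingerZ f) z Complex.I) := rfl
  rw [lhs, rhs, key 1, key Complex.I, keyb 1, keyb Complex.I,
    show fderiv ℝ (fderiv ℝ f) z 1 Complex.I = fderiv ℝ (fderiv ℝ f) z Complex.I 1 from
      symm 1 Complex.I]
  ring

section EntryLemmas

variable (ω : ℂ → ℝ) (l : ℂ)

lemma A_fun00 : (fun w => Amat ω l w 0 0)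
    = fun w => (1/2 : ℂ) * wirtingerZ (fun w => (ω w : ℂ)) w := by
  funext w; simp [Amat]; ring

lemma A_fun01 : (fun w => Amat ω l w 0 1)
    = fun w => (Complex.I * l⁻¹ / 4) * Complex.exp ((ω w : ℂ)) := by
  funext w; simp [Amat]; ring

lemma A_fun10 : (fun w => Amat ω l w 1 0)
    = fun w => (Complex.I / 4) * Complex.exp (-((ω w : ℂ))) := by
  funext w; simp [Amat]; ring

lemma A_fun11 : (fun w => Amat ω l w 1 1)
    = fun w => (-(1/2) : ℂ) * wirtingerZ (fun w => (ω w : ℂ)) w := by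
  funext w; simp [Amat]; ring

lemma B_fun00 : (fun w => Bmat ω l w 0 0)
    = fun w => (-(1/2) : ℂ) * wirtingerZbar (fun w => (ω w : ℂ)) w := by
  funext w; simp [Bmat]; ring

lemma B_fun01 : (fun w => Bmat ω l w 0 1)
    = fun w => (Complex.I / 4) * Complex.exp (-((ω w : ℂ))) := by
  funext w; simp [Bmat]; ring

lemma B_fun10 : (fun w => Bmat ω l w 1 0)
    = fun w => (Complex.I * l / 4) * Complex.exp ((ω w : ℂ)) := by
  funext w; simp [Bmat]; ring

lemma B_fun11 : (fun w => Bmat ω l w 1 1)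
    = fun w => (1/2 : ℂ) * wirtingerZbar (fun w => (ω w : ℂ)) w := by
  funext w; simp [Bmat]; ring

end EntryLemmas

/-- `ω` solves the sinh-Gordon equation `8 ω_{zz̄} + sinh(2ω) = 0` if and only if for every
`λ ∈ ℂ \ {0}` the zero-curvature (Maurer–Cartan) equation
`∂_{z̄} A_λ − ∂_z B_λ = A_λ B_λ − B_λ A_λ` holds at every point (entrywise). -/
theorem sinhGordon_iff_zero_curvature (ω : ℂ → ℝ) (hω : ContDiff ℝ (⊤ : ℕ∞) ω) :
    (∀ z : ℂ,
        8 * wirtingerZbar (wirtingerZ (fun w => (ω w : ℂ))) z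
          + Complex.sinh (2 * (ω z : ℂ)) = 0) ↔
    (∀ l : ℂ, l ≠ 0 → ∀ z : ℂ, ∀ i j : Fin 2,
        wirtingerZbar (fun w => Amat ω l w i j) z - wirtingerZ (fun w => Bmat ω l w i j) z
          = (Amat ω l z * Bmat ω l z - Bmat ω l z * Amat ω l z) i j) := by
  have hφ : ContDiff ℝ (⊤ : ℕ∞) (fun w => ((ω w : ℂ))) :=
    Complex.ofRealCLM.contDiff.comp hω
  have hφd : ∀ z, DifferentiableAt ℝ (fun w => ((ω w : ℂ))) z := fun z =>
    (hφ.differentiable (by simp)) z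
  have hXd : ∀ z, DifferentiableAt ℝ (wirtingerZ (fun w => ((ω w : ℂ)))) z := fun z =>
    ((contDiff_wZ _ hφ).differentiable (by simp)) z
  have hYd : ∀ z, DifferentiableAt ℝ (wirtingerZbar (fun w => ((ω w : ℂ)))) z := fun z =>
    ((contDiff_wZbar _ hφ).differentiable (by simp)) z
  have hexd : ∀ z, DifferentiableAt ℝ (fun w => Complex.exp ((ω w : ℂ))) z := fun z =>
    (((Complex.contDiff_exp (𝕜 := ℝ)).comp hφ).differentiable (by simp)) z
  have hexnd : ∀ z, DifferentiableAt ℝ (fun w => Complex.exp (-((ω w : ℂ)))) z := fun z =>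
    (((Complex.contDiff_exp (𝕜 := ℝ)).comp hφ.neg).differentiable (by simp)) z
  -- derivatives of exponentials
  have dbe : ∀ z, wirtingerZbar (fun w => Complex.exp ((ω w : ℂ))) z
      = Complex.exp ((ω z : ℂ)) * wirtingerZbar (fun w => ((ω w : ℂ))) z := fun z =>
    wZbar_exp _ z (hφd z)
  have dze : ∀ z, wirtingerZ (fun w => Complex.exp ((ω w : ℂ))) z
      = Complex.exp ((ω z : ℂ)) * wirtingerZ (fun w => ((ω w : ℂ))) z := fun z =>
    wZ_exp _ z (hφd z)
  have dben : ∀ z, wirtingerZbar (fun w => Complex.exp (-((ω w : ℂ)))) z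
      = -(Complex.exp (-((ω z : ℂ))) * wirtingerZbar (fun w => ((ω w : ℂ))) z) := by
    intro z
    rw [wZbar_exp (fun w => -((ω w : ℂ))) z (hφd z).neg, wZbar_neg]
    ring
  have dzen : ∀ z, wirtingerZ (fun w => Complex.exp (-((ω w : ℂ)))) z
      = -(Complex.exp (-((ω z : ℂ))) * wirtingerZ (fun w => ((ω w : ℂ))) z) := by
    intro z
    rw [wZ_exp (fun w => -((ω w : ℂ))) z (hφd z).neg, wZ_neg]
    ring
  have hsymm : ∀ z, wirtingerZ (wirtingerZbar (fun w => ((ω w : ℂ)))) z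
      = wirtingerZbar (wirtingerZ (fun w => ((ω w : ℂ)))) z := fun z => wirtinger_symm _ hφ z
  have hE : ∀ z : ℂ, Complex.exp ((ω z : ℂ)) ≠ 0 := fun z => Complex.exp_ne_zero _
  have hEmul : ∀ z : ℂ, Complex.exp (-((ω z : ℂ))) * Complex.exp ((ω z : ℂ)) = 1 := by
    intro z; rw [← Complex.exp_add]; simp
  have hsinh : ∀ z : ℂ, Complex.sinh (2 * ((ω z : ℂ)))
      = (Complex.exp ((ω z : ℂ)) * Complex.exp ((ω z : ℂ))
        - Complex.exp (-((ω z : ℂ))) * Complex.exp (-((ω z : ℂ)))) / 2 := by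
    intro z
    rw [Complex.sinh, two_mul, Complex.exp_add, neg_add, Complex.exp_add]
  constructor
  · intro h l hl z i j
    have hz := h z
    rw [hsinh z] at hz
    have hinv : l⁻¹ * l = 1 := inv_mul_cancel₀ hl
    fin_cases i <;> fin_cases j <;> simp only [Fin.zero_eta, Fin.mk_one, Fin.isValue]
    · rw [A_fun00, B_fun00, wZbar_const_mul _ _ _ (hXd z), wZ_const_mul _ _ _ (hYd z),
        hsymm z]
      simp only [Amat, Bmat, Matrix.mul_apply, Fin.sum_univ_two, Matrix.sub_apply,
        Matrix.smul_apply, smul_eq_mul, Matrix.cons_val', Matrix.cons_val_zero,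
        Matrix.cons_val_one, Matrix.head_cons, Matrix.head_fin_const, Matrix.empty_val',
        Matrix.cons_val_fin_one, Matrix.of_apply]
      linear_combination hz / 8
        - (Complex.exp ((ω z : ℂ)) * Complex.exp ((ω z : ℂ)) * Complex.I ^ 2 / 16) * hinv
        + ((Complex.exp (-((ω z : ℂ))) * Complex.exp (-((ω z : ℂ)))
            - Complex.exp ((ω z : ℂ)) * Complex.exp ((ω z : ℂ))) / 16) * Complex.I_sq
    · rw [A_fun01, B_fun01, wZbar_const_mul _ _ _ (hexd z), wZ_const_mul _ _ _ (hexnd z),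
        dbe z, dzen z]
      simp only [Amat, Bmat, Matrix.mul_apply, Fin.sum_univ_two, Matrix.sub_apply,
        Matrix.smul_apply, smul_eq_mul, Matrix.cons_val', Matrix.cons_val_zero,
        Matrix.cons_val_one, Matrix.head_cons, Matrix.head_fin_const, Matrix.empty_val',
        Matrix.cons_val_fin_one, Matrix.of_apply]
      ring
    · rw [A_fun10, B_fun10, wZbar_const_mul _ _ _ (hexnd z), wZ_const_mul _ _ _ (hexd z),
        dben z, dze z]
      simp only [Amat, Bmat, Matrix.mul_apply, Fin.sum_univ_two, Matrix.sub_apply,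
        Matrix.smul_apply, smul_eq_mul, Matrix.cons_val', Matrix.cons_val_zero,
        Matrix.cons_val_one, Matrix.head_cons, Matrix.head_fin_const, Matrix.empty_val',
        Matrix.cons_val_fin_one, Matrix.of_apply]
      ring
    · rw [A_fun11, B_fun11, wZbar_const_mul _ _ _ (hXd z), wZ_const_mul _ _ _ (hYd z),
        hsymm z]
      simp only [Amat, Bmat, Matrix.mul_apply, Fin.sum_univ_two, Matrix.sub_apply,
        Matrix.smul_apply, smul_eq_mul, Matrix.cons_val', Matrix.cons_val_zero,
        Matrix.cons_val_one, Matrix.head_cons, Matrix.head_fin_const, Matrix.empty_val',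
        Matrix.cons_val_fin_one, Matrix.of_apply]
      linear_combination -hz / 8
        + (Complex.exp ((ω z : ℂ)) * Complex.exp ((ω z : ℂ)) * Complex.I ^ 2 / 16) * hinv
        - ((Complex.exp (-((ω z : ℂ))) * Complex.exp (-((ω z : ℂ)))
            - Complex.exp ((ω z : ℂ)) * Complex.exp ((ω z : ℂ))) / 16) * Complex.I_sq
  · intro h z
    have h00 := h 1 one_ne_zero z 0 0
    rw [A_fun00, B_fun00, wZbar_const_mul _ _ _ (hXd z), wZ_const_mul _ _ _ (hYd z),
      hsymm z] at h00
    simp only [Amat, Bmat, Matrix.mul_apply, Fin.sum_univ_two, Matrix.sub_apply,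
      Matrix.smul_apply, smul_eq_mul, Matrix.cons_val', Matrix.cons_val_zero,
      Matrix.cons_val_one, Matrix.head_cons, Matrix.head_fin_const, Matrix.empty_val',
      Matrix.cons_val_fin_one, Matrix.of_apply, inv_one, one_mul, mul_one] at h00
    rw [hsinh z]
    linear_combination 8 * h00
      + ((Complex.exp ((ω z : ℂ)) * Complex.exp ((ω z : ℂ))
          - Complex.exp (-((ω z : ℂ))) * Complex.exp (-((ω z : ℂ)))) / 2) * Complex.I_sq
end

section
/- Let g ∈ ℕ and let ξ₋₁, ξ₀, …, ξ_g be trace-free 2×2 complex matrices with ξ₋₁ a complex multiple of E₁₂ = [[0,1],[0,0]], satisfying the reality condition ξ_d = −(conj ξ_{g−1−d})ᵀ for all d ∈ {−1, 0, …, g}; write ξ(λ) = Σ_{d=−1}^{g} ξ_d·λ^d for λ ∈ ℂ \ {0}. Then: (i) ξ(λ) = −λ^{g−1}·(conj ξ(1/conj λ))ᵀ for all λ ∈ ℂ \ {0}; (ii) if ξ(α) = 0 for some α ∈ ℂ \ {0}, then ξ(1/conj α) = 0; (iii) the function a(λ) := −λ·det ξ(λ) is a polynomial in λ of degree at most 2g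 which satisfies λ^{2g}·conj(a(1/conj λ)) = a(λ) for all λ ∈ ℂ \ {0}, and λ^{−g}·a(λ) is a nonpositive real number for every λ with |λ| = 1. -/
open Complex Matrix Polynomial

/-- The Laurent polynomial `ξ(λ) = Σ_{d=-1}^{g} ξ_d λ^d` with matrix coefficients. -/
noncomputable def xiFun (g : ℕ) (ξ : ℤ → Matrix (Fin 2) (Fin 2) ℂ) (l : ℂ) :
    Matrix (Fin 2) (Fin 2) ℂ :=
  ∑ d ∈ Finset.Icc (-1 : ℤ) (g : ℤ), l ^ d • ξ d

private lemma xi_symm (g : ℕ) (ξ : ℤ → Matrix (Fin 2) (Fin 2) ℂ)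
    (hreal : ∀ d : ℤ, -1 ≤ d → d ≤ (g : ℤ) →
      ξ d = -((ξ ((g : ℤ) - 1 - d)).conjTranspose)) :
    ∀ l : ℂ, l ≠ 0 →
      xiFun g ξ l
        = -(l ^ ((g : ℤ) - 1)) • ((xiFun g ξ ((starRingEnd ℂ l)⁻¹)).conjTranspose) := by
  intro l hl
  have hμ : starRingEnd ℂ ((starRingEnd ℂ l)⁻¹) = l⁻¹ := by
    rw [map_inv₀, Complex.conj_conj]
  unfold xiFun
  rw [Matrix.conjTranspose_sum, Finset.smul_sum]
  simp only [Matrix.conjTranspose_smul]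
  refine Finset.sum_nbij' (fun d => (g : ℤ) - 1 - d) (fun d => (g : ℤ) - 1 - d)
    ?_ ?_ ?_ ?_ ?_
  · intro a ha; simp only [Finset.mem_Icc] at *; omega
  · intro a ha; simp only [Finset.mem_Icc] at *; omega
  · intro a _; ring
  · intro a _; ring
  · intro d hd
    simp only [Finset.mem_Icc] at hd
    show l ^ d • ξ d
      = -l ^ ((g : ℤ) - 1) •
          star (((starRingEnd ℂ) l)⁻¹ ^ ((g : ℤ) - 1 - d)) • (ξ ((g : ℤ) - 1 - d))ᴴ
    have hξ : (ξ ((g : ℤ) - 1 - d)).conjTranspose = -(ξ d) := by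
      rw [hreal d hd.1 hd.2]; simp
    have hstar : star (((starRingEnd ℂ) l)⁻¹ ^ ((g : ℤ) - 1 - d))
        = l ^ (d - ((g : ℤ) - 1)) := by
      rw [star_zpow₀, show star ((starRingEnd ℂ) l)⁻¹ = l⁻¹ from hμ, _root_.inv_zpow, ← _root_.zpow_neg]
      congr 1; ring
    rw [hstar, hξ, smul_smul, neg_mul, ← zpow_add₀ hl, neg_smul, smul_neg, neg_neg]
    have he : (g : ℤ) - 1 + (d - ((g : ℤ) - 1)) = d := by ring
    rw [he]

private lemma xi_trace (g : ℕ) (ξ : ℤ → Matrix (Fin 2) (Fin 2) ℂ)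
    (htr : ∀ d : ℤ, -1 ≤ d → d ≤ (g : ℤ) → (ξ d).trace = 0) (l : ℂ) :
    (xiFun g ξ l).trace = 0 := by
  unfold xiFun
  rw [Matrix.trace_sum]
  refine Finset.sum_eq_zero fun d hd => ?_
  simp only [Finset.mem_Icc] at hd
  rw [Matrix.trace_smul, htr d hd.1 hd.2, smul_zero]

/-- Basic properties of a potential `ξ(λ) = Σ_{d=-1}^{g} ξ_d λ^d`: the symmetry
`ξ(λ) = -λ^{g-1} (conj ξ(1/conj λ))ᵀ`, the symmetry of the roots under
`λ ↦ 1/conj λ`, and the reality conditions for `a(λ) = -λ det ξ(λ)`. -/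
theorem potential_reality (g : ℕ) (ξ : ℤ → Matrix (Fin 2) (Fin 2) ℂ)
    (htr : ∀ d : ℤ, -1 ≤ d → d ≤ (g : ℤ) → (ξ d).trace = 0)
    (hE : ∃ c : ℂ, ξ (-1) = c • (!![0, 1; 0, 0] : Matrix (Fin 2) (Fin 2) ℂ))
    (hreal : ∀ d : ℤ, -1 ≤ d → d ≤ (g : ℤ) →
      ξ d = -((ξ ((g : ℤ) - 1 - d)).conjTranspose)) :
    (∀ l : ℂ, l ≠ 0 →
        xiFun g ξ l
          = -(l ^ ((g : ℤ) - 1)) • ((xiFun g ξ ((starRingEnd ℂ l)⁻¹)).conjTranspose)) ∧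
    (∀ α : ℂ, α ≠ 0 → xiFun g ξ α = 0 → xiFun g ξ ((starRingEnd ℂ α)⁻¹) = 0) ∧
    (∃ a : Polynomial ℂ, a.degree ≤ (2 * g : ℕ) ∧
        (∀ l : ℂ, l ≠ 0 → a.eval l = -l * (xiFun g ξ l).det) ∧
        (∀ l : ℂ, l ≠ 0 →
          l ^ (2 * g) * (starRingEnd ℂ) (a.eval ((starRingEnd ℂ l)⁻¹)) = a.eval l) ∧
        (∀ l : ℂ, ‖l‖ = 1 → ∃ r : ℝ, r ≤ 0 ∧ l ^ (-(g : ℤ)) * a.eval l = (r : ℂ))) := by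
  obtain ⟨c, hc⟩ := hE
  have hsymm := xi_symm g ξ hreal
  refine ⟨hsymm, ?_, ?_⟩
  · -- root symmetry
    intro α hα h0
    have hα' : (starRingEnd ℂ α)⁻¹ ≠ 0 := by
      simp [hα]
    have h := hsymm _ hα'
    rw [show (starRingEnd ℂ ((starRingEnd ℂ α)⁻¹))⁻¹ = α by
      rw [map_inv₀, Complex.conj_conj, inv_inv], h0] at h
    simpa using h
  · -- the polynomial a
    set M : Matrix (Fin 2) (Fin 2) (Polynomial ℂ) :=
      Matrix.of fun i j =>
        ∑ d ∈ Finset.Icc (-1 : ℤ) (g : ℤ), Polynomial.C (ξ d i j) * X ^ (d + 1).toNat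
      with hM
    -- evaluation of M
    have hmap : ∀ l : ℂ, l ≠ 0 → M.map (Polynomial.evalRingHom l) = l • xiFun g ξ l := by
      intro l hl
      ext i j
      simp only [hM, Matrix.map_apply, Matrix.of_apply, coe_evalRingHom,
        Polynomial.eval_finset_sum, eval_mul, eval_C, eval_pow, eval_X,
        Matrix.smul_apply, xiFun, Matrix.sum_apply, smul_eq_mul, Finset.mul_sum]
      refine Finset.sum_congr rfl fun d hd => ?_
      simp only [Finset.mem_Icc] at hd
      have hcast : ((d + 1).toNat : ℤ) = d + 1 := by omega
      rw [← zpow_natCast l ((d + 1).toNat), hcast, zpow_add₀ hl, zpow_one]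
      ring
    have heval : ∀ l : ℂ, l ≠ 0 → (M.det).eval l = l ^ 2 * (xiFun g ξ l).det := by
      intro l hl
      have h1 : (Polynomial.evalRingHom l) M.det = (M.map (Polynomial.evalRingHom l)).det :=
        RingHom.map_det _ _
      rw [hmap l hl, Matrix.det_smul] at h1
      simpa using h1
    -- coefficient 0 of det M vanishes
    have hp0 : (M.det).coeff 0 = 0 := by
      rw [Polynomial.coeff_zero_eq_eval_zero]
      have h1 : (Polynomial.evalRingHom (0 : ℂ)) M.det
          = (M.map (Polynomial.evalRingHom (0 : ℂ))).det := RingHom.map_det _ _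
      have h2 : M.map (Polynomial.evalRingHom (0 : ℂ)) = ξ (-1) := by
        ext i j
        simp only [hM, Matrix.map_apply, Matrix.of_apply, coe_evalRingHom,
          Polynomial.eval_finset_sum, eval_mul, eval_C, eval_pow, eval_X]
        rw [Finset.sum_eq_single (-1 : ℤ)]
        · norm_num
        · intro b hb hb'
          simp only [Finset.mem_Icc] at hb
          have : (b + 1).toNat ≠ 0 := by omega
          rw [zero_pow this, mul_zero]
        · intro h
          exfalso; apply h
          simp only [Finset.mem_Icc]
          omega
      have h3 : (ξ (-1)).det = 0 := by
        rw [hc, Matrix.det_smul]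
        simp [Matrix.det_fin_two_of]
      have := h1
      rw [h2, h3] at this
      simpa using this
    -- top-row entries of ξ g vanish
    have hξg : ξ (g : ℤ) = -(ξ (-1)).conjTranspose := by
      have := hreal (g : ℤ) (by omega) le_rfl
      rwa [show (g : ℤ) - 1 - g = -1 by ring] at this
    have hξg00 : ξ (g : ℤ) 0 0 = 0 := by
      rw [hξg, hc]; simp [Matrix.conjTranspose_apply]
    have hξg01 : ξ (g : ℤ) 0 1 = 0 := by
      rw [hξg, hc]; simp [Matrix.conjTranspose_apply]
    have hξg11 : ξ (g : ℤ) 1 1 = 0 := by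
      rw [hξg, hc]; simp [Matrix.conjTranspose_apply]
    -- degree bounds on entries
    have hdeg_entry : ∀ i j, (M i j).degree ≤ ((g + 1 : ℕ) : WithBot ℕ) := by
      intro i j
      simp only [hM, Matrix.of_apply]
      refine le_trans (Polynomial.degree_sum_le _ _) ?_
      refine Finset.sup_le fun d hd => ?_
      simp only [Finset.mem_Icc] at hd
      refine le_trans (Polynomial.degree_C_mul_X_pow_le _ _) ?_
      exact_mod_cast (by omega : (d + 1).toNat ≤ g + 1)
    have hdeg_small : ∀ i j, ξ (g : ℤ) i j = 0 → (M i j).degree ≤ ((g : ℕ) : WithBot ℕ) := by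
      intro i j hij
      simp only [hM, Matrix.of_apply]
      refine le_trans (Polynomial.degree_sum_le _ _) ?_
      refine Finset.sup_le fun d hd => ?_
      simp only [Finset.mem_Icc] at hd
      rcases eq_or_lt_of_le hd.2 with h | h
      · rw [h, hij]
        simp
      · refine le_trans (Polynomial.degree_C_mul_X_pow_le _ _) ?_
        exact_mod_cast (by omega : (d + 1).toNat ≤ g)
    -- degree of det M
    have hdegdet : (M.det).degree ≤ ((2 * g + 1 : ℕ) : WithBot ℕ) := by
      rw [Matrix.det_fin_two]
      refine le_trans (Polynomial.degree_sub_le _ _) (max_le ?_ ?_)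
      · refine le_trans (Polynomial.degree_mul_le _ _) ?_
        refine le_trans (add_le_add (hdeg_small 0 0 hξg00) (hdeg_small 1 1 hξg11)) ?_
        rw [← Nat.cast_add]
        exact_mod_cast (by omega : g + g ≤ 2 * g + 1)
      · refine le_trans (Polynomial.degree_mul_le _ _) ?_
        refine le_trans (add_le_add (hdeg_small 0 1 hξg01) (hdeg_entry 1 0)) ?_
        rw [← Nat.cast_add]
        exact_mod_cast (by omega : g + (g + 1) ≤ 2 * g + 1)
    refine ⟨-(M.det).divX, ?_, ?_, ?_, ?_⟩
    · -- degree bound for a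
      rw [Polynomial.degree_neg]
      refine (Polynomial.degree_le_iff_coeff_zero _ _).2 fun m hm => ?_
      rw [Polynomial.coeff_divX]
      refine Polynomial.coeff_eq_zero_of_degree_lt (lt_of_le_of_lt hdegdet ?_)
      have hm' : 2 * g < m := by exact_mod_cast hm
      exact_mod_cast (by omega : 2 * g + 1 < m + 1)
    · -- evaluation formula
      intro l hl
      have h1 : (M.det).eval l = l * ((M.det).divX.eval l) := by
        conv_lhs => rw [← (M.det).X_mul_divX_add]
        rw [eval_add, eval_mul, eval_X, eval_C, hp0, add_zero]
      have h2 := heval l hl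
      rw [h1] at h2
      have h2' : l * (M.det).divX.eval l = l * (l * (xiFun g ξ l).det) := by
        rw [h2]; ring
      have h3 : (M.det).divX.eval l = l * (xiFun g ξ l).det := mul_left_cancel₀ hl h2'
      rw [eval_neg, h3]
      ring
    · -- functional equation
      intro l hl
      have hμne : (starRingEnd ℂ l)⁻¹ ≠ 0 := by simp [hl]
      have haevl : ∀ m : ℂ, m ≠ 0 →
          (-(M.det).divX).eval m = -m * (xiFun g ξ m).det := by
        intro m hm
        have h1 : (M.det).eval m = m * ((M.det).divX.eval m) := by
          conv_lhs => rw [← (M.det).X_mul_divX_add]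
          rw [eval_add, eval_mul, eval_X, eval_C, hp0, add_zero]
        have h2 := heval m hm
        rw [h1] at h2
        have h2' : m * (M.det).divX.eval m = m * (m * (xiFun g ξ m).det) := by
          rw [h2]; ring
        have h3 : (M.det).divX.eval m = m * (xiFun g ξ m).det := mul_left_cancel₀ hm h2'
        rw [eval_neg, h3]; ring
      rw [haevl _ hμne, haevl _ hl]
      rw [hsymm l hl, Matrix.det_smul, Matrix.det_conjTranspose]
      have hμconj : starRingEnd ℂ ((starRingEnd ℂ l)⁻¹) = l⁻¹ := by
        rw [map_inv₀, Complex.conj_conj]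
      set D : ℂ := (xiFun g ξ ((starRingEnd ℂ l)⁻¹)).det with hD
      have hconj : (starRingEnd ℂ) (-(starRingEnd ℂ l)⁻¹ * D)
          = -l⁻¹ * (starRingEnd ℂ) D := by
        rw [_root_.map_mul, map_neg, hμconj]
      rw [hconj]
      have hz : (l : ℂ) ^ (2 * g) * l⁻¹ = l * (l ^ ((g : ℤ) - 1)) ^ 2 := by
        have e1 : ((2 * g : ℕ) : ℤ) + (-1) = 1 + (((g : ℤ) - 1) + ((g : ℤ) - 1)) := by
          push_cast; ring
        calc l ^ (2 * g) * l⁻¹ = l ^ (((2 * g : ℕ) : ℤ) + (-1)) := by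
              rw [zpow_add₀ hl, zpow_natCast, _root_.zpow_neg_one]
          _ = l ^ (1 + (((g : ℤ) - 1) + ((g : ℤ) - 1))) := by rw [e1]
          _ = l * (l ^ ((g : ℤ) - 1)) ^ 2 := by
              rw [zpow_add₀ hl, zpow_add₀ hl, zpow_one, sq]
      have hcard : (Fintype.card (Fin 2)) = 2 := by simp
      rw [hcard, neg_sq]
      calc l ^ (2 * g) * (-l⁻¹ * (starRingEnd ℂ) D)
          = -(l ^ (2 * g) * l⁻¹) * (starRingEnd ℂ) D := by ring
        _ = -(l * (l ^ ((g : ℤ) - 1)) ^ 2) * (starRingEnd ℂ) D := by rw [hz]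
        _ = -l * ((l ^ ((g : ℤ) - 1)) ^ 2 * star D) := by
              rw [Complex.star_def]; ring
    · -- reality on the unit circle
      intro l hl1
      have hl : l ≠ 0 := by
        intro h; rw [h] at hl1; simp at hl1
      have hns : Complex.normSq l = 1 := by
        rw [← Complex.sq_norm]
        rw [hl1]; norm_num
      have hμ : (starRingEnd ℂ l)⁻¹ = l := by
        have h1 : starRingEnd ℂ l * l = 1 := by
          rw [mul_comm, Complex.mul_conj, hns]; norm_num
        exact inv_eq_of_mul_eq_one_right h1
      set B : Matrix (Fin 2) (Fin 2) ℂ := xiFun g ξ l with hB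
      have hBsym : B = -(l ^ ((g : ℤ) - 1)) • B.conjTranspose := by
        have := hsymm l hl
        rwa [hμ] at this
      have htrB : B 0 0 + B 1 1 = 0 := by
        have := xi_trace g ξ htr l
        rw [Matrix.trace_fin_two] at this
        exact this
      have h00 : B 0 0 = -(l ^ ((g : ℤ) - 1)) * (starRingEnd ℂ) (B 0 0) := by
        conv_lhs => rw [hBsym]
        simp [Matrix.conjTranspose_apply]
      have h01 : B 0 1 = -(l ^ ((g : ℤ) - 1)) * (starRingEnd ℂ) (B 1 0) := by
        conv_lhs => rw [hBsym]
        simp [Matrix.conjTranspose_apply]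
      have h11 : B 1 1 = -B 0 0 := by linear_combination htrB
      have hdetB : B.det = l ^ ((g : ℤ) - 1)
          * ((Complex.normSq (B 0 0) : ℂ) + (Complex.normSq (B 1 0) : ℂ)) := by
        rw [Matrix.det_fin_two, h11]
        calc B 0 0 * -B 0 0 - B 0 1 * B 1 0
            = -(B 0 0 * B 0 0) - (B 0 1) * B 1 0 := by ring
          _ = -((-(l ^ ((g : ℤ) - 1)) * (starRingEnd ℂ) (B 0 0)) * B 0 0)
              - (-(l ^ ((g : ℤ) - 1)) * (starRingEnd ℂ) (B 1 0)) * B 1 0 := by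
                rw [← h00, ← h01]
          _ = l ^ ((g : ℤ) - 1) * (B 0 0 * (starRingEnd ℂ) (B 0 0)
              + B 1 0 * (starRingEnd ℂ) (B 1 0)) := by ring
          _ = _ := by rw [Complex.mul_conj, Complex.mul_conj]
      refine ⟨-(Complex.normSq (B 0 0) + Complex.normSq (B 1 0)), ?_, ?_⟩
      · have h1 : 0 ≤ Complex.normSq (B 0 0) := Complex.normSq_nonneg _
        have h2 : 0 ≤ Complex.normSq (B 1 0) := Complex.normSq_nonneg _
        linarith
      · have haevl : (-(M.det).divX).eval l = -l * B.det := by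
          have h1 : (M.det).eval l = l * ((M.det).divX.eval l) := by
            conv_lhs => rw [← (M.det).X_mul_divX_add]
            rw [eval_add, eval_mul, eval_X, eval_C, hp0, add_zero]
          have h2 := heval l hl
          rw [h1] at h2
          have h3 : (M.det).divX.eval l = l * (xiFun g ξ l).det :=
            mul_left_cancel₀ hl (h2.trans (by ring))
          rw [eval_neg, h3, ← hB]; ring
        rw [haevl, hdetB]
        have hz2 : l ^ (-(g : ℤ)) * l * l ^ ((g : ℤ) - 1) = 1 := by
          have e0 : (-(g : ℤ)) + 1 + ((g : ℤ) - 1) = 0 := by ring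
          have e1 : l ^ (-(g : ℤ)) * l * l ^ ((g : ℤ) - 1)
              = l ^ (-(g : ℤ)) * l ^ (1 : ℤ) * l ^ ((g : ℤ) - 1) := by rw [zpow_one]
          rw [e1, ← zpow_add₀ hl, ← zpow_add₀ hl, e0, zpow_zero]
        push_cast
        linear_combination (-(Complex.normSq (B 0 0) : ℂ) - (Complex.normSq (B 1 0) : ℂ)) * hz2
end

section
/- Let g ∈ ℕ and let a ∈ ℂ[λ] be a polynomial of degree exactly 2g obeying the reality conditions. Then there exists a polynomial β ∈ ℂ[λ] of degree at most g such that a(λ) = −β(λ)·λ^g·conj(β(1/conj λ)) for all λ ∈ ℂ \ {0}; equivalently a = −β·β*, where β*(λ) = Σ_{k=0}^{g} conj(β_{g−k})·λ^k and β_j denotes the coefficient of λ^j in β. -/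
open Complex Polynomial


lemma eval_reflect_aux (N : ℕ) (f : Polynomial ℂ) (hf : f.natDegree ≤ N) (l : ℂ) (hl : l ≠ 0) :
    (f.reflect N).eval l = l ^ N * f.eval l⁻¹ := by
  letI : Invertible (l⁻¹) := invertibleOfNonzero (inv_ne_zero hl)
  have h := Polynomial.eval₂_reflect_mul_pow (RingHom.id ℂ) (l⁻¹) N f hf
  have h2 : (⅟(l⁻¹) : ℂ) = l := by
    simp [invOf_eq_inv]
  rw [h2] at h
  simp only [eval₂_eq_eval_map, Polynomial.map_id] at h
  rw [← h, inv_pow, mul_left_comm, mul_inv_cancel₀ (pow_ne_zero N hl), mul_one]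

lemma conj_eval (p : Polynomial ℂ) (z : ℂ) :
    (starRingEnd ℂ) (p.eval z) = (p.map (starRingEnd ℂ)).eval ((starRingEnd ℂ) z) := by
  rw [eval_map, eval₂_eq_sum, eval_eq_sum, Polynomial.sum, Polynomial.sum]
  simp [map_sum]

lemma pstar_eval (N : ℕ) (p : Polynomial ℂ) (hp : p.natDegree ≤ N) (l : ℂ) (hl : l ≠ 0) :
    ((p.map (starRingEnd ℂ)).reflect N).eval l
      = l ^ N * (starRingEnd ℂ) (p.eval (((starRingEnd ℂ) l)⁻¹)) := by
  rw [eval_reflect_aux N _ (natDegree_map_le.trans hp) l hl]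
  congr 1
  rw [conj_eval p (((starRingEnd ℂ) l)⁻¹)]
  simp

lemma reality_star (N : ℕ) (p : Polynomial ℂ) (hp : p.natDegree ≤ N)
    (h : ∀ l : ℂ, l ≠ 0 → l ^ N * (starRingEnd ℂ) (p.eval (((starRingEnd ℂ) l)⁻¹)) = p.eval l) :
    (p.map (starRingEnd ℂ)).reflect N = p := by
  apply Polynomial.eq_of_infinite_eval_eq
  apply Set.Infinite.mono (s := {(0:ℂ)}ᶜ)
  · intro l hl
    simp only [Set.mem_setOf_eq]
    rw [pstar_eval N p hp l hl, h l hl]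
  · exact Set.Finite.infinite_compl (Set.finite_singleton 0)

open Filter Topology

lemma exp_ne_one (t : ℝ) (h0 : 0 < t) (h1 : t ≤ 1) : Complex.exp ((t:ℂ) * I) ≠ 1 := by
  intro hexp
  rw [Complex.exp_eq_one_iff] at hexp
  obtain ⟨n, hn⟩ := hexp
  have him := congrArg Complex.im hn
  simp [Complex.mul_im, Complex.mul_re] at him
  have hpi := Real.pi_gt_three
  rcases le_or_gt n 0 with hn0 | hn0
  · have : (n:ℝ) ≤ 0 := by exact_mod_cast hn0
    nlinarith
  · have : (1:ℝ) ≤ (n:ℝ) := by exact_mod_cast hn0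
    nlinarith
lemma double_root (G : ℕ) (a q : Polynomial ℂ) (α : ℂ) (hα0 : α ≠ 0)
    (hfac : a = (X - C α) * q)
    (hneg : ∀ l : ℂ, ‖l‖ = 1 → ∃ r : ℝ, r ≤ 0 ∧ l ^ (-(G : ℤ)) * a.eval l = (r : ℂ))
    (hαnorm : ‖α‖ = 1) : q.eval α = 0 := by
  have hroot : a.eval α = 0 := by simp [hfac]
  set N : ℤ := -(G : ℤ) with hN
  set w : ℂ → ℂ := fun z => α * Complex.exp (z * I) with hw
  have hw0 : w 0 = α := by simp [hw]
  have hwnorm : ∀ θ : ℝ, ‖w (θ : ℂ)‖ = 1 := by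
    intro θ
    simp only [hw, norm_mul, hαnorm, Complex.norm_exp_ofReal_mul_I, one_mul]
  have hwd : HasDerivAt w (α * I) 0 := by
    have h1 : HasDerivAt (fun z : ℂ => z * I) I 0 := by
      simpa using (hasDerivAt_id (0:ℂ)).mul_const I
    have h2 : HasDerivAt (fun z : ℂ => Complex.exp (z * I)) I 0 := by
      have h := (Complex.hasDerivAt_exp ((0:ℂ) * I)).comp 0 h1
      simp only [zero_mul, Complex.exp_zero, one_mul] at h
      exact h
    simpa using h2.const_mul α
  set D : ℂ := α ^ N * (a.derivative.eval α * (α * I)) with hD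
  have hFcd : HasDerivAt (fun z => (w z) ^ N * a.eval (w z)) D 0 := by
    have hz := hasDerivAt_zpow N α (Or.inl hα0)
    rw [← hw0] at hz
    have hd1 := hz.comp 0 hwd
    have hp := a.hasDerivAt α
    rw [← hw0] at hp
    have hd2 := hp.comp 0 hwd
    have := hd1.mul hd2
    simp only [Function.comp] at this
    refine this.congr_deriv ?_
    rw [hw0, hD, hroot]
    ring
  have hF : HasDerivAt (fun θ : ℝ => (w (θ:ℂ)) ^ N * a.eval (w (θ:ℂ))) D 0 := by
    have := hFcd.comp_ofReal (z := (0:ℝ))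
    simpa using this
  have hFval : ∀ θ : ℝ, ∃ r : ℝ, r ≤ 0 ∧ (w (θ:ℂ)) ^ N * a.eval (w (θ:ℂ)) = (r : ℂ) :=
    fun θ => hneg _ (hwnorm θ)
  -- real part has a local max at 0
  have hF0 : (w ((0:ℝ):ℂ)) ^ N * a.eval (w ((0:ℝ):ℂ)) = 0 := by
    simp [hw0, hroot]
  have hre : HasDerivAt (fun θ : ℝ => ((w (θ:ℂ)) ^ N * a.eval (w (θ:ℂ))).re) D.re 0 :=
    Complex.reCLM.hasFDerivAt.comp_hasDerivAt 0 hF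
  have him : HasDerivAt (fun θ : ℝ => ((w (θ:ℂ)) ^ N * a.eval (w (θ:ℂ))).im) D.im 0 :=
    Complex.imCLM.hasFDerivAt.comp_hasDerivAt 0 hF
  have hmax : IsLocalMax (fun θ : ℝ => ((w (θ:ℂ)) ^ N * a.eval (w (θ:ℂ))).re) 0 := by
    apply Filter.Eventually.of_forall
    intro θ
    obtain ⟨r, hr, hreq⟩ := hFval θ
    simp only [hreq, hF0]
    simpa using hr
  have hDre : D.re = 0 := hmax.hasDerivAt_eq_zero hre
  have hDim : D.im = 0 := by
    have hconst : (fun θ : ℝ => ((w (θ:ℂ)) ^ N * a.eval (w (θ:ℂ))).im) = fun _ => 0 := by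
      funext θ
      obtain ⟨r, hr, hreq⟩ := hFval θ
      simp [hreq]
    rw [hconst] at him
    exact him.unique (hasDerivAt_const 0 0)
  have hD0 : D = 0 := Complex.ext hDre hDim
  have hda : a.derivative.eval α = q.eval α := by
    rw [hfac]
    simp [Polynomial.derivative_mul]
  rw [hD, hda] at hD0
  have hne : α ^ N ≠ 0 := zpow_ne_zero N hα0
  have := mul_eq_zero.mp hD0
  rcases this with h | h
  · exact absurd h hne
  · rcases mul_eq_zero.mp h with h' | h'
    · exact h'
    · exact absurd h' (by simp [hα0, I_ne_zero])
lemma circle_limit (g : ℕ) (qt : Polynomial ℂ) (α : ℂ) (hα0 : α ≠ 0) (hαnorm : ‖α‖ = 1)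
    (key : ∀ l : ℂ, ‖l‖ = 1 → l ≠ α → ∃ r : ℝ, r ≤ 0 ∧ l ^ (-(g:ℤ)) * qt.eval l = (r:ℂ)) :
    ∃ r : ℝ, r ≤ 0 ∧ α ^ (-(g:ℤ)) * qt.eval α = (r:ℂ) := by
  set S : Set ℂ := {z | z.im = 0 ∧ z.re ≤ 0} with hSdef
  have hS : IsClosed S :=
    (isClosed_eq Complex.continuous_im continuous_const).inter
      (isClosed_le Complex.continuous_re continuous_const)
  set G : ℂ → ℂ := fun z => z ^ (-(g:ℤ)) * qt.eval z with hG
  set zk : ℕ → ℂ := fun k => α * Complex.exp (((1/(k+1) : ℝ) : ℂ) * I) with hzk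
  have hzknorm : ∀ k, ‖zk k‖ = 1 := by
    intro k
    simp only [hzk, norm_mul, hαnorm, Complex.norm_exp_ofReal_mul_I, one_mul]
  have hzkne : ∀ k, zk k ≠ α := by
    intro k h
    have hexp := mul_left_cancel₀ hα0 (h.trans (mul_one α).symm)
    exact exp_ne_one (1/(k+1)) (by positivity)
      (by rw [div_le_one (by positivity)]; linarith) hexp
  have htend : Tendsto zk atTop (𝓝 α) := by
    have hc : Continuous (fun t : ℝ => α * Complex.exp ((t:ℂ) * I)) := by
      continuity
    have h0 : Tendsto (fun k : ℕ => (1/(k+1) : ℝ)) atTop (𝓝 0) := by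
      exact tendsto_one_div_add_atTop_nhds_zero_nat
    have h2 := (hc.tendsto 0).comp h0
    simp only [Function.comp_def] at h2
    rw [show α * Complex.exp (((0:ℝ):ℂ)*I) = α by simp] at h2
    exact h2
  have hGc : ContinuousAt G α :=
    (continuousAt_zpow₀ α (-(g:ℤ)) (Or.inl hα0)).mul qt.continuousAt
  have hmem : ∀ k, G (zk k) ∈ S := by
    intro k
    obtain ⟨r, hr, heq⟩ := key (zk k) (hzknorm k) (hzkne k)
    have hGr : G (zk k) = (r : ℂ) := heq
    rw [hSdef]
    exact ⟨by rw [hGr]; simp, by rw [hGr]; simpa using hr⟩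
  have hlim : G α ∈ S := hS.mem_of_tendsto (hGc.tendsto.comp htend) (Eventually.of_forall hmem)
  refine ⟨(G α).re, hlim.2, ?_⟩
  have : G α = ((G α).re : ℂ) := Complex.ext (by simp) (by simpa using hlim.1)
  simpa [hG] using this

theorem main_aux_s6 : ∀ g : ℕ, ∀ a : Polynomial ℂ,
    a.degree = (2 * g : ℕ) →
    (∀ l : ℂ, l ≠ 0 →
      l ^ (2 * g) * (starRingEnd ℂ) (a.eval ((starRingEnd ℂ l)⁻¹)) = a.eval l) →
    (∀ l : ℂ, ‖l‖ = 1 → ∃ r : ℝ, r ≤ 0 ∧ l ^ (-(g : ℤ)) * a.eval l = (r : ℂ)) →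
    ∃ β : Polynomial ℂ, β.degree ≤ (g : ℕ) ∧
      ∀ l : ℂ, l ≠ 0 →
        a.eval l = -(β.eval l * l ^ g * (starRingEnd ℂ) (β.eval ((starRingEnd ℂ l)⁻¹))) := by
  intro g
  induction g with
  | zero =>
    intro a hdeg _ hneg
    obtain ⟨r, hr, h1⟩ := hneg 1 (by simp)
    simp only [one_zpow, one_mul] at h1
    have h0 : a.degree ≤ 0 := by rw [hdeg]; simp
    have ha : a = C (a.eval 1) := by
      conv_lhs => rw [Polynomial.eq_C_of_degree_le_zero h0]
      rw [Polynomial.eq_C_of_degree_le_zero h0]; simp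
    refine ⟨C ((Real.sqrt (-r) : ℝ) : ℂ), degree_C_le.trans (by simp), fun l hl => ?_⟩
    rw [ha]
    simp only [eval_C, pow_zero, mul_one, Complex.conj_ofReal, h1]
    rw [← Complex.ofReal_mul, Real.mul_self_sqrt (by linarith)]
    push_cast
    ring
  | succ g IH =>
    intro a hdeg hreal hneg
    have hane : a ≠ 0 := Polynomial.zero_le_degree_iff.mp (by
      rw [hdeg]
      exact_mod_cast Nat.zero_le _)
    have hnat : a.natDegree = 2 * (g + 1) := natDegree_eq_of_degree_eq_some hdeg
    have hstar : (a.map (starRingEnd ℂ)).reflect (2 * (g + 1)) = a :=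
      reality_star _ _ hnat.le hreal
    have ha0 : a.eval 0 ≠ 0 := by
      rw [← Polynomial.coeff_zero_eq_eval_zero, ← hstar, coeff_reflect,
        revAt_le (Nat.zero_le _), Nat.sub_zero, coeff_map]
      simp only [ne_eq, _root_.map_eq_zero]
      have hlc := Polynomial.leadingCoeff_ne_zero.mpr hane
      rwa [Polynomial.leadingCoeff, hnat] at hlc
    obtain ⟨α, hαroot⟩ := Complex.exists_root (f := a) (by
      rw [hdeg]
      exact_mod_cast (by omega : 0 < 2 * (g+1)))
    have hαroot' : a.eval α = 0 := hαroot
    have hα0 : α ≠ 0 := fun h => ha0 (h ▸ hαroot')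
    set b : ℂ := (starRingEnd ℂ) α with hb
    have hb0 : b ≠ 0 := by simp [hb, hα0]
    set α' : ℂ := b⁻¹ with hα'
    have hα'0 : α' ≠ 0 := inv_ne_zero hb0
    have hα'root : a.eval α' = 0 := by
      have h := hreal α' hα'0
      have hcc : (((starRingEnd ℂ) α')⁻¹ : ℂ) = α := by
        rw [hα', hb]
        simp [map_inv₀]
      rw [hcc, hαroot'] at h
      simp only [map_zero, mul_zero] at h
      exact h.symm
    obtain ⟨q, hq⟩ : (X - C α) ∣ a := dvd_iff_isRoot.mpr hαroot
    have hq'root : q.eval α' = 0 := by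
      by_cases hc : α' = α
      · have hnorm1 : ‖α‖ = 1 := by
          have h1 : α * b = 1 := by
            rw [hα'] at hc
            rw [← hc]
            exact inv_mul_cancel₀ hb0
          have h2 : Complex.normSq α = 1 := by
            have := h1
            rw [hb, Complex.mul_conj] at this
            exact_mod_cast this
          have := Complex.normSq_eq_norm_sq α
          rw [h2] at this
          nlinarith [norm_nonneg α]
        rw [hc]
        exact double_root (g+1) a q α hα0 hq hneg hnorm1
      · have h := hα'root
        rw [hq, eval_mul] at h
        simp only [eval_sub, eval_X, eval_C] at h
        rcases mul_eq_zero.mp h with h' | h'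
        · exact absurd (sub_eq_zero.mp h') hc
        · exact h'
    obtain ⟨q₂, hq₂⟩ : (X - C α') ∣ q := dvd_iff_isRoot.mpr hq'root
    have hfac0 : a = (X - C α) * ((X - C α') * q₂) := by rw [hq, hq₂]
    have hq₂0 : q₂ ≠ 0 := by
      intro h
      apply hane
      rw [hfac0, h, mul_zero, mul_zero]
    have hndq₂ : q₂.natDegree = 2 * g := by
      have h1 := hnat
      rw [hfac0, natDegree_mul (X_sub_C_ne_zero α)
        (mul_ne_zero (X_sub_C_ne_zero α') hq₂0),
        natDegree_mul (X_sub_C_ne_zero α') hq₂0, natDegree_X_sub_C,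
        natDegree_X_sub_C] at h1
      omega
    -- constants
    set c : ℝ := Real.sqrt (‖α‖⁻¹) with hcdef
    have hcpos : 0 < c :=
      Real.sqrt_pos.mpr (inv_pos.mpr (norm_pos_iff.mpr hα0))
    have hc0 : ((c:ℝ):ℂ) ≠ 0 := by exact_mod_cast hcpos.ne'
    have hc2 : ((c:ℝ):ℂ)^2 = ((‖α‖⁻¹ : ℝ) : ℂ) := by
      rw [← Complex.ofReal_pow, Real.sq_sqrt (by positivity)]
    set u : ℂ := -b * ((c:ℝ):ℂ)^2 with hu
    have hu0 : u ≠ 0 := by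
      rw [hu]
      exact mul_ne_zero (neg_ne_zero.mpr hb0) (pow_ne_zero 2 hc0)
    set qt : Polynomial ℂ := C u⁻¹ * q₂ with hqt
    have hqtdeg : qt.degree = (2 * g : ℕ) := by
      rw [hqt, degree_mul, degree_C (inv_ne_zero hu0), zero_add,
        degree_eq_natDegree hq₂0, hndq₂]
    have hqtnat : qt.natDegree = 2 * g := natDegree_eq_of_degree_eq_some hqtdeg
    have hfac : ∀ l : ℂ, a.eval l = (u * (l - α) * (l - α')) * qt.eval l := by
      intro l
      rw [hfac0, hqt]
      simp only [eval_mul, eval_sub, eval_X, eval_C]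
      field_simp
    have hprel : ∀ l : ℂ, l ≠ 0 →
        l^2 * (starRingEnd ℂ) (u * (((starRingEnd ℂ) l)⁻¹ - α) * (((starRingEnd ℂ) l)⁻¹ - α')) =
          u * (l - α) * (l - α') := by
      intro l hl
      have hcu : (starRingEnd ℂ) u = -α * ((c:ℝ):ℂ)^2 := by
        rw [hu, hb]
        simp [Complex.conj_ofReal]
      have hcα' : (starRingEnd ℂ) α' = α⁻¹ := by
        rw [hα', hb, map_inv₀, Complex.conj_conj]
      simp only [map_mul, map_sub, map_inv₀, Complex.conj_conj, hcu, hcα', ← hb]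
      rw [hα']
      field_simp
      ring
    have hsign : ∀ l : ℂ, ‖l‖ = 1 →
        l⁻¹ * (u * (l - α) * (l - α')) = ((‖l - α‖^2 * ‖α‖⁻¹ : ℝ) : ℂ) := by
      intro l hln
      have hl0 : l ≠ 0 := by
        intro h; rw [h] at hln; simp at hln
      have hconj : (starRingEnd ℂ) l = l⁻¹ := by
        have h1 : l * (starRingEnd ℂ) l = 1 := by
          rw [Complex.mul_conj]
          norm_cast
          rw [Complex.normSq_eq_norm_sq, hln, one_pow]
        exact eq_inv_of_mul_eq_one_right h1
      have hms : ((‖l - α‖^2 : ℝ) : ℂ) = (l - α) * (l⁻¹ - b) := by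
        rw [← hconj, hb, ← map_sub, ← Complex.normSq_eq_norm_sq,
          ← Complex.mul_conj]
      rw [Complex.ofReal_mul, hms, ← hc2, hu, hα']
      field_simp
      ring
    have hkey : ∀ l : ℂ, ‖l‖ = 1 → l ≠ α →
        ∃ r : ℝ, r ≤ 0 ∧ l ^ (-(g:ℤ)) * qt.eval l = (r:ℂ) := by
      intro l hln hlα
      have hl0 : l ≠ 0 := by
        intro h; rw [h] at hln; simp at hln
      obtain ⟨r, hr, hra⟩ := hneg l hln
      set s : ℝ := ‖l - α‖^2 * ‖α‖⁻¹ with hs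
      have hs0 : 0 < s := by
        rw [hs]
        have h1 : 0 < ‖l - α‖ := norm_pos_iff.mpr (sub_ne_zero.mpr hlα)
        have h2 : 0 < ‖α‖ := norm_pos_iff.mpr hα0
        positivity
      refine ⟨r / s, div_nonpos_of_nonpos_of_nonneg hr hs0.le, ?_⟩
      rw [hfac l] at hra
      have hzs : l ^ (-((g+1 : ℕ) : ℤ)) = l⁻¹ * l ^ (-(g:ℤ)) := by
        rw [← zpow_neg_one, ← zpow_add₀ hl0]
        congr 1
        push_cast
        ring
      rw [hzs] at hra
      have hfs := hsign l hln
      have hmain : ((s:ℝ):ℂ) * (l ^ (-(g:ℤ)) * qt.eval l) = (r:ℂ) := by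
        rw [← hfs, ← hra]
        ring
      have hsc : ((s:ℝ):ℂ) ≠ 0 := by exact_mod_cast hs0.ne'
      rw [Complex.ofReal_div, eq_div_iff hsc]
      linear_combination hmain
    have hqtneg : ∀ l : ℂ, ‖l‖ = 1 → ∃ r : ℝ, r ≤ 0 ∧ l ^ (-(g:ℤ)) * qt.eval l = (r:ℂ) := by
      intro l hln
      by_cases hlα : l = α
      · subst hlα
        exact circle_limit g qt l hα0 hln hkey
      · exact hkey l hln hlα
    have hqtrealpt : ∀ l : ℂ, l ≠ 0 → l ≠ α → l ≠ α' →
        l ^ (2*g) * (starRingEnd ℂ) (qt.eval (((starRingEnd ℂ) l)⁻¹)) = qt.eval l := by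
      intro l hl hlα hlα'
      have hP : u * (l - α) * (l - α') ≠ 0 :=
        mul_ne_zero (mul_ne_zero hu0 (sub_ne_zero.mpr hlα)) (sub_ne_zero.mpr hlα')
      have h := hreal l hl
      rw [hfac l, hfac (((starRingEnd ℂ) l)⁻¹), map_mul] at h
      have hpr := hprel l hl
      apply mul_left_cancel₀ hP
      rw [← h, ← hpr]
      ring
    have hstar_qt : (qt.map (starRingEnd ℂ)).reflect (2*g) = qt := by
      apply Polynomial.eq_of_infinite_eval_eq
      apply Set.Infinite.mono (s := ({0, α, α'} : Set ℂ)ᶜ)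
      · intro l hl
        simp only [Set.mem_compl_iff, Set.mem_insert_iff, Set.mem_singleton_iff, not_or] at hl
        obtain ⟨h1, h2, h3⟩ := hl
        simp only [Set.mem_setOf_eq]
        rw [pstar_eval (2*g) qt hqtnat.le l h1, hqtrealpt l h1 h2 h3]
      · exact Set.Finite.infinite_compl (by simp)
    have hqtreal : ∀ l : ℂ, l ≠ 0 →
        l ^ (2*g) * (starRingEnd ℂ) (qt.eval (((starRingEnd ℂ) l)⁻¹)) = qt.eval l := by
      intro l hl
      rw [← pstar_eval (2*g) qt hqtnat.le l hl, hstar_qt]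
    obtain ⟨β₁, hβ₁deg, hβ₁⟩ := IH qt hqtdeg hqtreal hqtneg
    refine ⟨C ((c:ℝ):ℂ) * (X - C α) * β₁, ?_, ?_⟩
    · have h1 : (C ((c:ℝ):ℂ) * (X - C α)).degree ≤ 1 := by
        apply (degree_mul_le _ _).trans
        rw [degree_X_sub_C]
        calc (C ((c:ℝ):ℂ)).degree + 1 ≤ 0 + 1 := by
              exact add_le_add_left degree_C_le 1
          _ = 1 := zero_add 1
      calc (C ((c:ℝ):ℂ) * (X - C α) * β₁).degree
          ≤ (C ((c:ℝ):ℂ) * (X - C α)).degree + β₁.degree := degree_mul_le _ _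
        _ ≤ 1 + (g : ℕ) := add_le_add h1 hβ₁deg
        _ = ((g + 1 : ℕ) : WithBot ℕ) := by
            push_cast
            ring
    · intro l hl
      rw [hfac l]
      simp only [eval_mul, eval_sub, eval_X, eval_C, map_mul, map_sub, map_inv₀,
        Complex.conj_conj, Complex.conj_ofReal]
      rw [hβ₁ l hl, ← hb, hα', hu]
      rw [pow_succ]
      field_simp
      ring

/-- A polynomial `a` of degree `2g` obeying the reality conditions factors as
`a(λ) = -β(λ) λ^g conj(β(1/conj λ))` for some polynomial `β` of degree at most `g`. -/
theorem reality_polynomial_factorization (g : ℕ) (a : Polynomial ℂ)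
    (hdeg : a.degree = (2 * g : ℕ))
    (hreal : ∀ l : ℂ, l ≠ 0 →
      l ^ (2 * g) * (starRingEnd ℂ) (a.eval ((starRingEnd ℂ l)⁻¹)) = a.eval l)
    (hneg : ∀ l : ℂ, ‖l‖ = 1 → ∃ r : ℝ, r ≤ 0 ∧ l ^ (-(g : ℤ)) * a.eval l = (r : ℂ)) :
    ∃ β : Polynomial ℂ, β.degree ≤ (g : ℕ) ∧
      ∀ l : ℂ, l ≠ 0 →
        a.eval l = -(β.eval l * l ^ g * (starRingEnd ℂ) (β.eval ((starRingEnd ℂ l)⁻¹))) := by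
  exact main_aux_s6 g a hdeg hreal hneg
end

section
/- Let H ≥ 0 be a real number, set s = √(H² + 1), λ₁ = (H − i)/s, λ₂ = (H + i)/s, and let β₀ > 0 satisfy β₀² = π²·s/(2s + 2H). Then for a complex number λ with |λ| = 1 and an integer l, the equation β₀²·(λ + λ⁻¹) = π²·l² − 2β₀² holds if and only if either l = 0 and λ = −1, or l² = 1 and λ ∈ {λ₁, λ₂}. -/
open Complex Real

/-- In the spectral-genus-zero rotational family with mean curvature `H ≥ 0`, the unimodular
solutions `λ` of `β₀²(λ + λ⁻¹) = π² l² - 2β₀²` with `l ∈ ℤ` are exactly `λ = -1` (with `l = 0`)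
and the two Sym points `λ₁ = (H-i)/√(H²+1)`, `λ₂ = (H+i)/√(H²+1)` (with `l² = 1`). -/
theorem genus_zero_roots_of_mu_squared_minus_one (H : ℝ) (hH : 0 ≤ H)
    (β₀ : ℝ) (hβpos : 0 < β₀)
    (hβsq : β₀ ^ 2 = π ^ 2 * Real.sqrt (H ^ 2 + 1)
      / (2 * Real.sqrt (H ^ 2 + 1) + 2 * H))
    (l : ℂ) (hl : ‖l‖ = 1) (n : ℤ) :
    (β₀ : ℂ) ^ 2 * (l + l⁻¹) = (π : ℂ) ^ 2 * (n : ℂ) ^ 2 - 2 * (β₀ : ℂ) ^ 2 ↔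
      (n = 0 ∧ l = -1) ∨
      (n ^ 2 = 1 ∧
        (l = ((H : ℂ) - Complex.I) / (Real.sqrt (H ^ 2 + 1) : ℝ) ∨
         l = ((H : ℂ) + Complex.I) / (Real.sqrt (H ^ 2 + 1) : ℝ))) := by
  set s := Real.sqrt (H ^ 2 + 1) with hs_def
  have hs2 : s ^ 2 = H ^ 2 + 1 := Real.sq_sqrt (by positivity)
  have hspos : 0 < s := Real.sqrt_pos.mpr (by positivity)
  have hHs : H < s := by nlinarith
  have hden : (0:ℝ) < 2 * s + 2 * H := by linarith
  have hπ : (0:ℝ) < π := Real.pi_pos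
  have habs : ‖l‖ = 1 := hl
  have hinv : l⁻¹ = (starRingEnd ℂ) l := Complex.inv_eq_conj habs
  have hre : l + l⁻¹ = ((2 * l.re : ℝ) : ℂ) := by rw [hinv, Complex.add_conj]
  have hA : l.re * l.re + l.im * l.im = 1 := by
    have h1 := Complex.sq_norm l
    rw [habs] at h1
    have h2 := h1.symm
    rw [Complex.normSq_apply] at h2
    linarith [h2]
  have hb2 : β₀ ^ 2 * (2 * s + 2 * H) = π ^ 2 * s := by
    rw [hβsq]; field_simp
  have key : ((β₀:ℂ) ^ 2 * (l + l⁻¹) = (π:ℂ) ^ 2 * (n:ℂ) ^ 2 - 2 * (β₀:ℂ) ^ 2)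
      ↔ β₀ ^ 2 * (2 * l.re) = π ^ 2 * (n:ℝ) ^ 2 - 2 * β₀ ^ 2 := by
    rw [hre]
    constructor
    · intro h; exact_mod_cast h
    · intro h; exact_mod_cast h
  rw [key]
  have hsC : ((s:ℝ):ℂ) ≠ 0 := by exact_mod_cast hspos.ne'
  constructor
  · intro h
    have hmain : s * (l.re + 1) = (n:ℝ) ^ 2 * (s + H) := by
      apply mul_left_cancel₀ (a := π ^ 2) (by positivity)
      linear_combination (-(l.re + 1)) * hb2 + (s + H) * h
    have hR1 : l.re ≤ 1 := by nlinarith [sq_nonneg (l.re - 1), sq_nonneg l.im]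
    have hnR : (n:ℝ) ^ 2 ≤ 2 := by nlinarith [hmain]
    have hnZ : n ^ 2 ≤ 2 := by exact_mod_cast hnR
    have h2a : 2 * n ≤ 3 := by nlinarith [sq_nonneg (n - 1)]
    have h2b : -3 ≤ 2 * n := by nlinarith [sq_nonneg (n + 1)]
    have hcases : n = -1 ∨ n = 0 ∨ n = 1 := by omega
    have sym : (n:ℝ) ^ 2 = 1 → (l = ((H : ℂ) - Complex.I) / ((s:ℝ):ℂ) ∨
         l = ((H : ℂ) + Complex.I) / ((s:ℝ):ℂ)) := by
      intro hn1
      have hre' : s * l.re = H := by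
        rw [hn1] at hmain; linarith [hmain]
      have him2 : (s * l.im) ^ 2 = 1 := by
        linear_combination s ^ 2 * hA + hs2 - (s * l.re + H) * hre'
      have hfac : (s * l.im - 1) * (s * l.im + 1) = 0 := by linear_combination him2
      rcases mul_eq_zero.mp hfac with h' | h'
      · right
        rw [eq_div_iff hsC]
        apply Complex.ext
        · simp [Complex.mul_re]; linarith [hre']
        · simp [Complex.mul_im]; linarith [h']
      · left
        rw [eq_div_iff hsC]
        apply Complex.ext
        · simp [Complex.mul_re]; linarith [hre']
        · simp [Complex.mul_im]; linarith [h']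
    rcases hcases with hn | hn | hn
    · subst hn
      exact Or.inr ⟨by norm_num, sym (by norm_num)⟩
    · subst hn
      refine Or.inl ⟨rfl, ?_⟩
      have hre' : l.re = -1 := by
        norm_num at hmain
        have h' : l.re + 1 = 0 := hmain.resolve_left hspos.ne'
        linarith [h']
      have him' : l.im = 0 := by nlinarith [hA, sq_nonneg l.im]
      apply Complex.ext <;> simp [hre', him']
    · subst hn
      exact Or.inr ⟨by norm_num, sym (by norm_num)⟩
  · rintro (⟨hn, hl1⟩ | ⟨hn, (hl1 | hl1)⟩)
    · subst hn; subst hl1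
      push_cast
      norm_num
      ring
    · subst hl1
      have hnR : ((n:ℝ)) ^ 2 = 1 := by exact_mod_cast hn
      rw [hnR]
      have hreval : (((H : ℂ) - Complex.I) / ((s:ℝ):ℂ)).re = H / s := by simp
      rw [hreval]
      field_simp
      linear_combination hb2
    · subst hl1
      have hnR : ((n:ℝ)) ^ 2 = 1 := by exact_mod_cast hn
      rw [hnR]
      have hreval : (((H : ℂ) + Complex.I) / ((s:ℝ):ℂ)).re = H / s := by simp
      rw [hreval]
      field_simp
      linear_combination hb2
end

section
/- Let H ≥ 0 and α > 2 be real numbers, set s = √(H² + 1), λ₁ = (H − i)/s, λ₂ = (H + i)/s, and let β₁² = π²·s/(2H + α·s). Then for every complex number λ with |λ| = 1 the number β₁²·(λ + α + λ⁻¹) is real and satisfies 0 < β₁²·(λ + α + λ⁻¹) ≤ 2π²; moreover, for λ unimodular and l an integer, the equation β₁²·(λ + α + λ⁻¹) = π²·l² holds if and only if l² = 1 and λ ∈ {λ₁, λ₂}. -/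
open Complex Real

/-- In the spectral-genus-one rotational family with `H ≥ 0` and `α > 2`, the quantity
`β₁²(λ + α + λ⁻¹)` is real with `0 < β₁²(λ + α + λ⁻¹) ≤ 2π²` for every unimodular `λ`, and
the equation `β₁²(λ + α + λ⁻¹) = π² l²` with `l ∈ ℤ` and `|λ| = 1` holds exactly for
`l² = 1` and `λ` one of the two Sym points. -/
theorem genus_one_roots_of_mu_squared_minus_one (H α : ℝ) (hH : 0 ≤ H) (hα : 2 < α)
    (b : ℝ)
    (hb : b = π ^ 2 * Real.sqrt (H ^ 2 + 1) / (2 * H + α * Real.sqrt (H ^ 2 + 1))) :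
    (∀ l : ℂ, ‖l‖ = 1 →
      ∃ r : ℝ, 0 < r ∧ r ≤ 2 * π ^ 2 ∧ (b : ℂ) * (l + (α : ℂ) + l⁻¹) = (r : ℂ)) ∧
    (∀ l : ℂ, ‖l‖ = 1 → ∀ n : ℤ,
      ((b : ℂ) * (l + (α : ℂ) + l⁻¹) = (π : ℂ) ^ 2 * (n : ℂ) ^ 2 ↔
        n ^ 2 = 1 ∧
          (l = ((H : ℂ) - Complex.I) / (Real.sqrt (H ^ 2 + 1) : ℝ) ∨
           l = ((H : ℂ) + Complex.I) / (Real.sqrt (H ^ 2 + 1) : ℝ)))) := by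
  have hπ : 0 < π := Real.pi_pos
  set s := Real.sqrt (H ^ 2 + 1) with hsdef
  have hs2 : s ^ 2 = H ^ 2 + 1 := Real.sq_sqrt (by positivity)
  have hsnn : 0 ≤ s := Real.sqrt_nonneg _
  have hs1 : 1 ≤ s := by nlinarith
  have hs0 : 0 < s := lt_of_lt_of_le one_pos hs1
  have hden : 0 < 2 * H + α * s := by nlinarith
  have hb0 : 0 < b := by rw [hb]; positivity
  have hbe : b * (2 * H + α * s) = π ^ 2 * s := by
    rw [hb]; field_simp
  have hsC : (s : ℂ) ≠ 0 := by exact_mod_cast hs0.ne'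
  -- key reduction to a real quantity
  have key : ∀ l : ℂ, ‖l‖ = 1 →
      (b : ℂ) * (l + (α : ℂ) + l⁻¹) = ((b * (2 * l.re + α) : ℝ) : ℂ) := by
    intro l hl
    rw [Complex.inv_eq_conj hl]
    have h2 : l + (starRingEnd ℂ) l = 2 * (l.re : ℂ) := by
      rw [Complex.add_conj]; push_cast; ring
    push_cast
    linear_combination (b : ℂ) * h2
  have hnorm : ∀ l : ℂ, ‖l‖ = 1 → l.re ^ 2 + l.im ^ 2 = 1 := by
    intro l hl
    have h1 : Complex.normSq l = 1 := by
      rw [Complex.normSq_eq_norm_sq, hl]; norm_num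
    rw [Complex.normSq_apply] at h1
    nlinarith [h1]
  have hrange : ∀ l : ℂ, ‖l‖ = 1 →
      0 < b * (2 * l.re + α) ∧ b * (2 * l.re + α) ≤ 2 * π ^ 2 := by
    intro l hl
    have hn := hnorm l hl
    have hre1 : l.re ≤ 1 := by nlinarith [sq_nonneg l.im, sq_nonneg (l.re - 1)]
    have hre2 : -1 ≤ l.re := by nlinarith [sq_nonneg l.im, sq_nonneg (l.re + 1)]
    constructor
    · have : 0 < 2 * l.re + α := by nlinarith
      exact mul_pos hb0 this
    · nlinarith [mul_nonneg (mul_nonneg (sq_nonneg π) hsnn) (sub_nonneg.2 hre1),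
        mul_pos (mul_pos (pow_pos hπ 2) hs0) (show (0:ℝ) < α - 2 by linarith),
        mul_nonneg (sq_nonneg π) hH]
  refine ⟨?_, ?_⟩
  · intro l hl
    obtain ⟨h1, h2⟩ := hrange l hl
    exact ⟨b * (2 * l.re + α), h1, h2, key l hl⟩
  · intro l hl n
    constructor
    · intro hEq
      rw [key l hl] at hEq
      have hreal : b * (2 * l.re + α) = π ^ 2 * (n : ℝ) ^ 2 := by
        have : ((b * (2 * l.re + α) : ℝ) : ℂ) = ((π ^ 2 * (n : ℝ) ^ 2 : ℝ) : ℂ) := by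
          rw [hEq]; push_cast; ring
        exact_mod_cast this
      obtain ⟨hpos, hle⟩ := hrange l hl
      have hn0 : (0:ℝ) < (n : ℝ) ^ 2 := by nlinarith
      have hnz : n ≠ 0 := by
        intro h; rw [h] at hn0; simp at hn0
      have hub : ((n : ℝ)) ^ 2 ≤ 2 := by nlinarith
      have hubZ : n ^ 2 ≤ 2 := by exact_mod_cast (by push_cast; linarith : ((n ^ 2 : ℤ) : ℝ) ≤ 2)
      have hn2 : n ^ 2 = 1 := by
        have h1 : n ≤ 1 := by nlinarith
        have h2 : -1 ≤ n := by nlinarith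
        interval_cases n
        · rfl
        · exact absurd rfl hnz
        · rfl
      refine ⟨hn2, ?_⟩
      -- from n² = 1, get l.re * s = H
      have hreal1 : b * (2 * l.re + α) = π ^ 2 := by
        have : ((n:ℝ)) ^ 2 = 1 := by exact_mod_cast hn2
        rw [hreal, this, mul_one]
      have h3 : b * (l.re * s - H) = 0 := by
        linear_combination (s / 2) * hreal1 - (1 / 2) * hbe
      have hxs : l.re * s = H := by
        rcases mul_eq_zero.mp h3 with h | h
        · exact absurd h hb0.ne'
        · linarith
      have hn := hnorm l hl
      have him : (l.im * s) ^ 2 = 1 := by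
        linear_combination s ^ 2 * hn - (l.re * s + H) * hxs + hs2
      have hfac : (l.im * s - 1) * (l.im * s + 1) = 0 := by linear_combination him
      rcases mul_eq_zero.mp hfac with h | h
      · -- im * s = 1 : second Sym point
        right
        rw [eq_div_iff hsC]
        apply Complex.ext
        · simp [Complex.mul_re]
          linarith [hxs]
        · simp [Complex.mul_im]
          linarith
      · left
        rw [eq_div_iff hsC]
        apply Complex.ext
        · simp [Complex.mul_re]
          linarith [hxs]
        · simp [Complex.mul_im]
          linarith
    · rintro ⟨hn2, hcase⟩
      have hnC : ((n : ℂ)) ^ 2 = 1 := by exact_mod_cast hn2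
      rw [key l hl, hnC, mul_one]
      have hre : l.re * s = H := by
        rcases hcase with h | h
        · have hls : l * (s : ℂ) = (H : ℂ) - Complex.I := by
            rw [h]; field_simp
          have := congrArg Complex.re hls
          simpa [Complex.mul_re] using this
        · have hls : l * (s : ℂ) = (H : ℂ) + Complex.I := by
            rw [h]; field_simp
          have := congrArg Complex.re hls
          simpa [Complex.mul_re] using this
      have : b * (2 * l.re + α) = π ^ 2 := by
        have h5 : b * (2 * l.re + α) * s = π ^ 2 * s := by
          linear_combination 2 * b * hre + hbe
        exact mul_right_cancel₀ hs0.ne' h5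
      rw [this]
      push_cast
      ring
end

section
/- Let g ∈ ℕ, let I ⊆ ℝ be an open interval, and let U ⊆ ℂ \ {0} be a nonempty open set. For each t ∈ I let a_t, b_t, c_t ∈ ℂ[λ] be polynomials of degrees at most 2g, g+1 and g+1 respectively, whose coefficients are continuously differentiable functions of t. Suppose ν : U × I → ℂ is continuously differentiable, nowhere zero, holomorphic in λ for each fixed t, and satisfies ν(λ,t)² = a_t(λ)/λ on U × I. Suppose h : U × I → ℂ is twice continuously differentiable, holomorphic in λ for each fixed t, with ∂h/∂λ(λ,t) = b_t(λ)/(ν(λ,t)·λ²) and ∂h/∂t(λ,t) = c_t(λ)/(ν(λ,t)·λ) on U × I. Then for every t ∈ I the polynomial identity 2·ḃ_t·a_t − b_t·ȧ_t = 2λ·a_t·c_t′ − a_t·c_t − λ·a_t′·c_t holds in ℂ[λ], where ′ denotes the derivative with respect to λ and ˙ denotes the coefficientwise derivative with respect to t. -/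
open Complex Polynomial Filter Topology

private lemma evalHasDeriv {I : Set ℝ} (hIopen : IsOpen I) (a : ℝ → Polynomial ℂ) (d : ℕ)
    (hdeg : ∀ s ∈ I, (a s).degree ≤ (d : ℕ))
    (hC1 : ∀ n : ℕ, ContDiffOn ℝ 1 (fun s => (a s).coeff n) I)
    {t : ℝ} (ht : t ∈ I) (l : ℂ) :
    HasDerivAt (fun s => (a s).eval l)
      ((∑ n ∈ Finset.range (d + 1),
        Polynomial.C (deriv (fun s => (a s).coeff n) t) * Polynomial.X ^ n).eval l) t := by
  have hsum : HasDerivAt (fun s => ∑ n ∈ Finset.range (d + 1), (a s).coeff n * l ^ n)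
      (∑ n ∈ Finset.range (d + 1), deriv (fun s => (a s).coeff n) t * l ^ n) t := by
    apply HasDerivAt.fun_sum
    intro n _
    have hdiff : DifferentiableAt ℝ (fun s => (a s).coeff n) t :=
      ((hC1 n).differentiableOn one_ne_zero).differentiableAt (hIopen.mem_nhds ht)
    exact hdiff.hasDerivAt.mul_const _
  have heval : (∑ n ∈ Finset.range (d + 1),
      Polynomial.C (deriv (fun s => (a s).coeff n) t) * Polynomial.X ^ n).eval l
      = ∑ n ∈ Finset.range (d + 1), deriv (fun s => (a s).coeff n) t * l ^ n := by
    simp [Polynomial.eval_finset_sum]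
  rw [heval]
  apply hsum.congr_of_eventuallyEq
  filter_upwards [hIopen.mem_nhds ht] with s hs
  exact Polynomial.eval_eq_sum_range'
    (lt_of_le_of_lt (Polynomial.natDegree_le_iff_degree_le.2 (hdeg s hs)) (Nat.lt_succ_self d)) l

/-- The Whitham deformation equation: if `ν² = a_t(λ)/λ`, `∂h/∂λ = b_t(λ)/(ν λ²)` and
`∂h/∂t = c_t(λ)/(ν λ)` on an open set `U × I`, with `h` twice continuously differentiable and
`ν, h` holomorphic in `λ`, then the mixed second derivatives of `h` commute, which is
equivalent to the polynomial identity
`2 ḃ a - b ȧ = 2 λ a c' - a c - λ a' c`. -/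
theorem whitham_polynomial_identity (g : ℕ) (I : Set ℝ)
    (hIopen : IsOpen I) (hIconn : I.OrdConnected)
    (U : Set ℂ) (hUopen : IsOpen U) (hUne : U.Nonempty) (hU0 : (0 : ℂ) ∉ U)
    (a b c : ℝ → Polynomial ℂ)
    (hadeg : ∀ t ∈ I, (a t).degree ≤ (2 * g : ℕ))
    (hbdeg : ∀ t ∈ I, (b t).degree ≤ (g + 1 : ℕ))
    (hcdeg : ∀ t ∈ I, (c t).degree ≤ (g + 1 : ℕ))
    (haC1 : ∀ n : ℕ, ContDiffOn ℝ 1 (fun t => (a t).coeff n) I)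
    (hbC1 : ∀ n : ℕ, ContDiffOn ℝ 1 (fun t => (b t).coeff n) I)
    (hcC1 : ∀ n : ℕ, ContDiffOn ℝ 1 (fun t => (c t).coeff n) I)
    (ν h : ℂ × ℝ → ℂ)
    (hνC1 : ContDiffOn ℝ 1 ν (U ×ˢ I))
    (hνne : ∀ p ∈ U ×ˢ I, ν p ≠ 0)
    (hνhol : ∀ t ∈ I, ∀ l ∈ U, DifferentiableAt ℂ (fun w => ν (w, t)) l)
    (hνsq : ∀ l ∈ U, ∀ t ∈ I, ν (l, t) ^ 2 = (a t).eval l / l)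
    (hhC2 : ContDiffOn ℝ 2 h (U ×ˢ I))
    (hhhol : ∀ t ∈ I, ∀ l ∈ U, DifferentiableAt ℂ (fun w => h (w, t)) l)
    (hhl : ∀ l ∈ U, ∀ t ∈ I,
      deriv (fun w => h (w, t)) l = (b t).eval l / (ν (l, t) * l ^ 2))
    (hht : ∀ l ∈ U, ∀ t ∈ I,
      deriv (fun s => h (l, s)) t = (c t).eval l / (ν (l, t) * l)) :
    ∀ t ∈ I, ∀ l : ℂ,
      2 * (deriv (fun s => (b s).eval l) t) * (a t).eval l
          - (b t).eval l * (deriv (fun s => (a s).eval l) t)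
        = 2 * l * (a t).eval l * ((c t).derivative.eval l)
          - (a t).eval l * (c t).eval l
          - l * ((a t).derivative.eval l) * (c t).eval l := by
  intro t ht
  have hUinf : U.Infinite := by
    obtain ⟨u, hu⟩ := hUne
    exact infinite_of_mem_nhds u (hUopen.mem_nhds hu)
  set adot : Polynomial ℂ := ∑ n ∈ Finset.range (2 * g + 1),
      Polynomial.C (deriv (fun s => (a s).coeff n) t) * Polynomial.X ^ n with hadot
  set bdot : Polynomial ℂ := ∑ n ∈ Finset.range (g + 1 + 1),
      Polynomial.C (deriv (fun s => (b s).coeff n) t) * Polynomial.X ^ n with hbdot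
  have haev : ∀ l : ℂ, HasDerivAt (fun s => (a s).eval l) (adot.eval l) t := fun l =>
    evalHasDeriv hIopen a (2 * g) hadeg haC1 ht l
  have hbev : ∀ l : ℂ, HasDerivAt (fun s => (b s).eval l) (bdot.eval l) t := fun l =>
    evalHasDeriv hIopen b (g + 1) hbdeg hbC1 ht l
  have hopen : IsOpen (U ×ˢ I) := hUopen.prod hIopen
  -- The key pointwise identity on U
  have key : ∀ l ∈ U,
      2 * bdot.eval l * (a t).eval l - (b t).eval l * adot.eval l
        = 2 * l * (a t).eval l * ((c t).derivative.eval l)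
          - (a t).eval l * (c t).eval l
          - l * ((a t).derivative.eval l) * (c t).eval l := by
    intro l hl
    have hl0 : l ≠ 0 := fun h0 => hU0 (h0 ▸ hl)
    have hpU : ((l, t) : ℂ × ℝ) ∈ U ×ˢ I := ⟨hl, ht⟩
    have hnhds : U ×ˢ I ∈ 𝓝 ((l, t) : ℂ × ℝ) := hopen.mem_nhds hpU
    set n0 : ℂ := ν (l, t) with hn0
    have hn0ne : n0 ≠ 0 := hνne _ hpU
    -- derivative of ν in the t-direction
    have hνdiff : DifferentiableAt ℝ ν (l, t) :=
      (hνC1.differentiableOn one_ne_zero).differentiableAt hnhds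
    have hcurveT : HasDerivAt (fun s : ℝ => ((l, s) : ℂ × ℝ)) (0, 1) t :=
      (hasDerivAt_const t l).prodMk (hasDerivAt_id t)
    set nt : ℂ := fderiv ℝ ν (l, t) (0, 1) with hntdef
    have hνT : HasDerivAt (fun s => ν (l, s)) nt t :=
      hνdiff.hasFDerivAt.comp_hasDerivAt t hcurveT
    -- derivative of ν in the λ-direction
    have hνlhol : DifferentiableAt ℂ (fun w => ν (w, t)) l := hνhol t ht l hl
    set nl : ℂ := deriv (fun w => ν (w, t)) l with hnldef
    have hνL : HasDerivAt (fun w => ν (w, t)) nl l := hνlhol.hasDerivAt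
    -- relation R1 : 2 n0 nt l = ȧ(l)
    have hsqT : HasDerivAt (fun s => ν (l, s) ^ 2) (2 * n0 * nt) t := by
      have hmm := hνT.fun_mul hνT
      have h2fun : (fun s => ν (l, s) * ν (l, s)) = fun s => ν (l, s) ^ 2 := by
        funext s; ring
      rw [h2fun] at hmm
      rw [show (2 * n0 * nt) = nt * ν (l, t) + ν (l, t) * nt by rw [hn0]; ring]
      exact hmm
    have hR1 : 2 * n0 * nt * l = adot.eval l := by
      have h2 : HasDerivAt (fun s => (a s).eval l / l) (adot.eval l / l) t :=
        (haev l).div_const l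
      have heq : (fun s => (a s).eval l / l) =ᶠ[𝓝 t] (fun s => ν (l, s) ^ 2) := by
        filter_upwards [hIopen.mem_nhds ht] with s hs
        exact (hνsq l hl s hs).symm
      have := (h2.congr_of_eventuallyEq heq.symm).unique hsqT
      field_simp at this
      linear_combination -this
    -- relation R2 : 2 n0 nl l² = a'(l) l - a(l)
    have hsqL : HasDerivAt (fun w => ν (w, t) ^ 2) (2 * n0 * nl) l := by
      have hmm := hνL.fun_mul hνL
      have h2fun : (fun w => ν (w, t) * ν (w, t)) = fun w => ν (w, t) ^ 2 := by
        funext w; ring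
      rw [h2fun] at hmm
      rw [show (2 * n0 * nl) = nl * ν (l, t) + ν (l, t) * nl by rw [hn0]; ring]
      exact hmm
    have hquotA : HasDerivAt (fun w => (a t).eval w / w)
        (((a t).derivative.eval l * l - (a t).eval l * 1) / l ^ 2) l :=
      ((a t).hasDerivAt l).div (hasDerivAt_id l) hl0
    have hR2 : 2 * n0 * nl * l ^ 2 = (a t).derivative.eval l * l - (a t).eval l := by
      have heq : (fun w => (a t).eval w / w) =ᶠ[𝓝 l] (fun w => ν (w, t) ^ 2) := by
        filter_upwards [hUopen.mem_nhds hl] with w hw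
        exact (hνsq w hw t ht).symm
      have := (hquotA.congr_of_eventuallyEq heq.symm).unique hsqL
      field_simp at this
      linear_combination -this
    -- second derivative of h and its symmetry
    have hC2at : ContDiffAt ℝ 2 h (l, t) := hhC2.contDiffAt hnhds
    have hFC1 : ContDiffAt ℝ 1 (fderiv ℝ h) (l, t) := hC2at.fderiv_right (by norm_num)
    have hFdiff : DifferentiableAt ℝ (fderiv ℝ h) (l, t) := hFC1.differentiableAt one_ne_zero
    set S := fderiv ℝ (fderiv ℝ h) (l, t) with hSdef
    have hsymm : ∀ v w : ℂ × ℝ, S v w = S w v := by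
      intro v w
      apply second_derivative_symmetric_of_eventually (f := h) (f' := fderiv ℝ h)
        (x := ((l, t) : ℂ × ℝ))
      · filter_upwards [hnhds] with q hq
        exact (((hhC2.differentiableOn two_ne_zero).differentiableAt
          (hopen.mem_nhds hq))).hasFDerivAt
      · exact hFdiff.hasFDerivAt
    -- t-derivative of ∂h/∂λ
    have hFcurve : HasDerivAt (fun s => fderiv ℝ h (l, s)) (S (0, 1)) t :=
      hFdiff.hasFDerivAt.comp_hasDerivAt t hcurveT
    have hC1' : HasDerivAt (fun s => fderiv ℝ h (l, s) (1, 0)) (S (0, 1) (1, 0)) t := by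
      have := hFcurve.clm_apply (hasDerivAt_const t (((1 : ℂ), (0 : ℝ)) : ℂ × ℝ))
      simpa using this
    have hmixT : ∀ s ∈ I, deriv (fun w => h (w, s)) l = fderiv ℝ h (l, s) (1, 0) := by
      intro s hs
      have hq : ((l, s) : ℂ × ℝ) ∈ U ×ˢ I := ⟨hl, hs⟩
      have hdh : DifferentiableAt ℝ h (l, s) :=
        (hhC2.differentiableOn two_ne_zero).differentiableAt (hopen.mem_nhds hq)
      have hcomp : HasFDerivAt (fun w => h (w, s))
          ((fderiv ℝ h (l, s)).comp
            ((ContinuousLinearMap.id ℝ ℂ).prod (0 : ℂ →L[ℝ] ℝ))) l :=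
        hdh.hasFDerivAt.comp l ((hasFDerivAt_id l).prodMk (hasFDerivAt_const s l))
      have hd : HasDerivAt (fun w => h (w, s)) (deriv (fun w => h (w, s)) l) l :=
        (hhhol s hs l hl).hasDerivAt
      have huniq := hcomp.unique (hd.hasFDerivAt.restrictScalars ℝ)
      have happ := congrArg (fun T : ℂ →L[ℝ] ℂ => T 1) huniq
      simpa using happ.symm
    have hD1' : HasDerivAt (fun s => deriv (fun w => h (w, s)) l) (S (0, 1) (1, 0)) t := by
      apply hC1'.congr_of_eventuallyEq
      filter_upwards [hIopen.mem_nhds ht] with s hs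
      exact hmixT s hs
    have hdenomT : HasDerivAt (fun s => ν (l, s) * l ^ 2) (nt * l ^ 2) t := hνT.mul_const _
    have hquotT : HasDerivAt (fun s => (b s).eval l / (ν (l, s) * l ^ 2))
        ((bdot.eval l * (n0 * l ^ 2) - (b t).eval l * (nt * l ^ 2)) / (n0 * l ^ 2) ^ 2) t :=
      (hbev l).div hdenomT (mul_ne_zero hn0ne (pow_ne_zero 2 hl0))
    have hD1'' : HasDerivAt (fun s => deriv (fun w => h (w, s)) l)
        ((bdot.eval l * (n0 * l ^ 2) - (b t).eval l * (nt * l ^ 2)) / (n0 * l ^ 2) ^ 2) t := by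
      apply hquotT.congr_of_eventuallyEq
      filter_upwards [hIopen.mem_nhds ht] with s hs
      exact hhl l hl s hs
    have hR3a : S (0, 1) (1, 0)
        = (bdot.eval l * (n0 * l ^ 2) - (b t).eval l * (nt * l ^ 2)) / (n0 * l ^ 2) ^ 2 :=
      hD1'.unique hD1''
    -- λ-derivative of ∂h/∂t
    have hmixL : ∀ w ∈ U, deriv (fun s => h (w, s)) t = fderiv ℝ h (w, t) (0, 1) := by
      intro w hw
      have hq : ((w, t) : ℂ × ℝ) ∈ U ×ˢ I := ⟨hw, ht⟩
      have hdh : DifferentiableAt ℝ h (w, t) :=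
        (hhC2.differentiableOn two_ne_zero).differentiableAt (hopen.mem_nhds hq)
      have hcomp : HasDerivAt (fun s => h (w, s)) (fderiv ℝ h (w, t) (0, 1)) t :=
        hdh.hasFDerivAt.comp_hasDerivAt t
          ((hasDerivAt_const t w).prodMk (hasDerivAt_id t))
      exact hcomp.deriv
    have hFcurveL : HasFDerivAt (fun w => fderiv ℝ h (w, t))
        (S.comp ((ContinuousLinearMap.id ℝ ℂ).prod (0 : ℂ →L[ℝ] ℝ))) l :=
      hFdiff.hasFDerivAt.comp l ((hasFDerivAt_id l).prodMk (hasFDerivAt_const t l))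
    have hGL : HasFDerivAt (fun w => fderiv ℝ h (w, t) (0, 1))
        ((fderiv ℝ h (l, t)).comp (0 : ℂ →L[ℝ] ℂ × ℝ)
          + (S.comp ((ContinuousLinearMap.id ℝ ℂ).prod (0 : ℂ →L[ℝ] ℝ))).flip (0, 1)) l :=
      hFcurveL.clm_apply (hasFDerivAt_const (((0 : ℂ), (1 : ℝ)) : ℂ × ℝ) l)
    have hdenomL : HasDerivAt (fun w => ν (w, t) * w) (nl * l + n0 * 1) l :=
      hνL.mul (hasDerivAt_id l)
    have hquotL : HasDerivAt (fun w => (c t).eval w / (ν (w, t) * w))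
        (((c t).derivative.eval l * (n0 * l) - (c t).eval l * (nl * l + n0 * 1))
          / (n0 * l) ^ 2) l :=
      ((c t).hasDerivAt l).div hdenomL (mul_ne_zero hn0ne hl0)
    have hev : (fun w => fderiv ℝ h (w, t) (0, 1))
        =ᶠ[𝓝 l] (fun w => (c t).eval w / (ν (w, t) * w)) := by
      filter_upwards [hUopen.mem_nhds hl] with w hw
      rw [← hmixL w hw]
      exact hht w hw t ht
    have hGquot : HasDerivAt (fun w => fderiv ℝ h (w, t) (0, 1))
        (((c t).derivative.eval l * (n0 * l) - (c t).eval l * (nl * l + n0 * 1))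
          / (n0 * l) ^ 2) l :=
      hquotL.congr_of_eventuallyEq hev
    have huniqL := hGL.unique (hGquot.hasFDerivAt.restrictScalars ℝ)
    have hR3b : S (1, 0) (0, 1)
        = ((c t).derivative.eval l * (n0 * l) - (c t).eval l * (nl * l + n0 * 1))
          / (n0 * l) ^ 2 := by
      have happ := congrArg (fun T : ℂ →L[ℝ] ℂ => T 1) huniqL
      simpa using happ
    -- the mixed partials agree
    have hR3 : (bdot.eval l * (n0 * l ^ 2) - (b t).eval l * (nt * l ^ 2)) / (n0 * l ^ 2) ^ 2
        = ((c t).derivative.eval l * (n0 * l) - (c t).eval l * (nl * l + n0 * 1))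
          / (n0 * l) ^ 2 := by
      rw [← hR3a, ← hR3b]
      exact hsymm _ _
    have h3 : bdot.eval l * n0 - (b t).eval l * nt
        = (c t).derivative.eval l * n0 * l - (c t).eval l * (nl * l) - (c t).eval l * n0 := by
      have hcc := (div_eq_div_iff (pow_ne_zero 2 (mul_ne_zero hn0ne (pow_ne_zero 2 hl0)))
        (pow_ne_zero 2 (mul_ne_zero hn0ne hl0))).mp hR3
      apply mul_left_cancel₀
        (show (n0 ^ 2 * l ^ 4 : ℂ) ≠ 0 from
          mul_ne_zero (pow_ne_zero 2 hn0ne) (pow_ne_zero 4 hl0))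
      linear_combination hcc
    have h0 : (a t).eval l = n0 ^ 2 * l := by
      rw [hνsq l hl t ht]
      field_simp
    linear_combination (2 * n0 * l) * h3 + (b t).eval l * hR1 - (c t).eval l * hR2
      + (2 * bdot.eval l - 2 * l * (c t).derivative.eval l + 2 * (c t).eval l) * h0
  -- upgrade to a polynomial identity, valid for all l
  have hpoly : Polynomial.C 2 * bdot * a t - b t * adot
      = Polynomial.C 2 * Polynomial.X * a t * (c t).derivative - a t * c t
        - Polynomial.X * (a t).derivative * c t := by
    apply Polynomial.eq_of_infinite_eval_eq
    apply hUinf.mono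
    intro l hl
    simp only [Set.mem_setOf_eq, Polynomial.eval_sub, Polynomial.eval_mul, Polynomial.eval_C,
      Polynomial.eval_X]
    linear_combination key l hl
  intro l
  have hfin := congrArg (Polynomial.eval l) hpoly
  simp only [Polynomial.eval_sub, Polynomial.eval_mul, Polynomial.eval_C,
    Polynomial.eval_X] at hfin
  rw [(haev l).deriv, (hbev l).deriv]
  linear_combination hfin
end

section
/- For an integer k ≥ 0 let a_k ∈ ℚ be defined by a_k = (−2)^k·binom(−1/2, k), equivalently a_k = binom(2k, k)/2^k. For ℓ ≥ 0 let C_ℓ(w) = Σ_{k=0}^{ℓ} a_k·w^{ℓ−k} ∈ ℚ[w]. Then in ℚ[w] the polynomial (w − 2)·C_ℓ(w)² has degree 2ℓ+1 with leading coefficient 1, its coefficient of w^d is 0 for every d with ℓ+1 ≤ d ≤ 2ℓ, and its coefficient of w^ℓ equals −2·a_{ℓ+1}. -/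
open Polynomial

noncomputable section

/-- `a_k = (-2)^k · binom(-1/2, k)`. -/
def aCoeff (k : ℕ) : ℚ := (-2 : ℚ) ^ k * Ring.choose (-1/2 : ℚ) k

/-- `C_ℓ(w) = Σ_{k=0}^{ℓ} a_k w^{ℓ-k}`, the polynomial part of `w^ℓ (1-2/w)^{-1/2}`. -/
def CPoly (ℓ : ℕ) : Polynomial ℚ :=
  ∑ k ∈ Finset.range (ℓ + 1), Polynomial.C (aCoeff k) * Polynomial.X ^ (ℓ - k)

lemma ring_choose_succ (r : ℚ) (k : ℕ) :
    (k+1 : ℚ) * Ring.choose r (k+1) = (r - k) * Ring.choose r k := by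
  have h1 := Ring.descPochhammer_eq_factorial_smul_choose (R := ℚ) r (k+1)
  have h2 := Ring.descPochhammer_eq_factorial_smul_choose (R := ℚ) r k
  rw [descPochhammer_succ_right, Polynomial.smeval_mul, h2,
    Polynomial.smeval_sub, Polynomial.smeval_X, Polynomial.smeval_natCast] at h1
  simp only [Nat.factorial_succ, nsmul_eq_mul, Nat.cast_mul, pow_one, pow_zero, mul_one] at h1
  push_cast at h1
  have hf : (Nat.factorial k : ℚ) ≠ 0 := by positivity
  refine mul_left_cancel₀ hf ?_
  linear_combination -h1

lemma aCoeff_zero : aCoeff 0 = 1 := by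
  simp [aCoeff, Ring.choose_zero_right]

lemma aCoeff_rec (k : ℕ) : (k+1 : ℚ) * aCoeff (k+1) = (2*k+1) * aCoeff k := by
  have h := ring_choose_succ (-1/2 : ℚ) k
  unfold aCoeff
  have h2 : ((-2:ℚ))^(k+1) = (-2) * (-2)^k := by ring
  rw [h2]
  linear_combination ((-2:ℚ)^k * (-2)) * h

lemma aCoeff_eq (k : ℕ) : aCoeff k = (Nat.choose (2 * k) k : ℚ) / 2 ^ k := by
  induction k with
  | zero => simp [aCoeff_zero]
  | succ k ih =>
    have hrec := aCoeff_rec k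
    rw [ih] at hrec
    have hc : (k + 1) * Nat.choose (2 * (k+1)) (k+1) = 2 * (2 * k + 1) * Nat.choose (2*k) k := by
      have := Nat.succ_mul_centralBinom_succ k
      simpa [Nat.centralBinom] using this
    have hk1 : ((k:ℚ) + 1) ≠ 0 := by positivity
    have hcq : ((k : ℚ) + 1) * (Nat.choose (2 * (k+1)) (k+1) : ℚ)
        = 2 * (2 * k + 1) * (Nat.choose (2*k) k : ℚ) := by
      exact_mod_cast congrArg (Nat.cast : ℕ → ℚ) hc
    refine mul_left_cancel₀ hk1 ?_
    rw [hrec]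
    field_simp
    linear_combination (-(2:ℚ)^k) * hcq

def bSum (n : ℕ) : ℚ := ∑ j ∈ Finset.range (n + 1), aCoeff j * aCoeff (n - j)

lemma weighted (n : ℕ) :
    2 * (∑ j ∈ Finset.range (n + 1), (j : ℚ) * (aCoeff j * aCoeff (n - j))) = n * bSum n := by
  have hrefl := Finset.sum_range_reflect (fun j => (j : ℚ) * (aCoeff j * aCoeff (n - j))) (n + 1)
  simp only [Nat.add_sub_cancel] at hrefl
  have h2 : ∑ j ∈ Finset.range (n + 1), ((n - j : ℕ) : ℚ) * (aCoeff (n - j) * aCoeff (n - (n - j)))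
      = ∑ j ∈ Finset.range (n + 1), ((n : ℚ) - j) * (aCoeff (n - j) * aCoeff j) := by
    refine Finset.sum_congr rfl fun j hj => ?_
    have hjn : j ≤ n := by
      have := Finset.mem_range.mp hj; omega
    rw [Nat.sub_sub_self hjn, Nat.cast_sub hjn]
  rw [h2] at hrefl
  unfold bSum
  rw [two_mul]
  nth_rewrite 1 [← hrefl]
  rw [← Finset.sum_add_distrib, Finset.mul_sum]
  exact Finset.sum_congr rfl fun j hj => by ring

lemma bSum_succ (n : ℕ) : bSum (n + 1) = 2 * bSum n := by
  have hw := weighted (n + 1)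
  have hT : (∑ j ∈ Finset.range (n + 1 + 1), (j : ℚ) * (aCoeff j * aCoeff (n + 1 - j)))
      = ∑ i ∈ Finset.range (n + 1), ((i : ℚ) + 1) * (aCoeff (i + 1) * aCoeff (n - i)) := by
    rw [Finset.sum_range_succ' (fun j => (j : ℚ) * (aCoeff j * aCoeff (n + 1 - j))) (n + 1)]
    simp only [Nat.cast_zero, zero_mul, add_zero]
    refine Finset.sum_congr rfl fun i hi => ?_
    have h : n + 1 - (i + 1) = n - i := by omega
    rw [h]
    push_cast
    ring
  have hT2 : ∑ i ∈ Finset.range (n + 1), ((i : ℚ) + 1) * (aCoeff (i + 1) * aCoeff (n - i))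
      = ∑ i ∈ Finset.range (n + 1), (2 * (i:ℚ) + 1) * (aCoeff i * aCoeff (n - i)) := by
    refine Finset.sum_congr rfl fun i hi => ?_
    have hr := aCoeff_rec i
    calc ((i : ℚ) + 1) * (aCoeff (i + 1) * aCoeff (n - i))
        = (((i:ℚ)+1) * aCoeff (i+1)) * aCoeff (n - i) := by ring
      _ = ((2*(i:ℚ)+1) * aCoeff i) * aCoeff (n - i) := by rw [hr]
      _ = (2 * (i:ℚ) + 1) * (aCoeff i * aCoeff (n - i)) := by ring
  have hb : ∑ i ∈ Finset.range (n+1), aCoeff i * aCoeff (n - i) = bSum n := rfl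
  have hT3 : ∑ i ∈ Finset.range (n + 1), (2 * (i:ℚ) + 1) * (aCoeff i * aCoeff (n - i))
      = ((n:ℚ) + 1) * bSum n := by
    have hw2 := weighted n
    calc ∑ i ∈ Finset.range (n + 1), (2 * (i:ℚ) + 1) * (aCoeff i * aCoeff (n - i))
        = 2 * (∑ i ∈ Finset.range (n + 1), (i : ℚ) * (aCoeff i * aCoeff (n - i)))
          + ∑ i ∈ Finset.range (n + 1), aCoeff i * aCoeff (n - i) := by
          rw [Finset.mul_sum, ← Finset.sum_add_distrib]
          exact Finset.sum_congr rfl fun i _ => by ring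
      _ = (n : ℚ) * bSum n + bSum n := by rw [hw2, hb]
      _ = ((n:ℚ) + 1) * bSum n := by ring
  rw [hT, hT2, hT3] at hw
  have hne : ((n:ℚ) + 1) ≠ 0 := by positivity
  refine mul_left_cancel₀ hne ?_
  push_cast at hw
  linear_combination -hw

lemma bSum_eq (n : ℕ) : bSum n = 2 ^ n := by
  induction n with
  | zero => simp [bSum, aCoeff_zero]
  | succ n ih => rw [bSum_succ, ih]; ring

lemma cpoly_coeff (ℓ m : ℕ) :
    (CPoly ℓ).coeff m = if m ≤ ℓ then aCoeff (ℓ - m) else 0 := by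
  unfold CPoly
  rw [Polynomial.finset_sum_coeff]
  simp only [Polynomial.coeff_C_mul, Polynomial.coeff_X_pow, mul_ite, mul_one, mul_zero]
  by_cases h : m ≤ ℓ
  · rw [if_pos h, Finset.sum_eq_single (ℓ - m)]
    · rw [if_pos (by omega)]
    · intro k hk hne
      rw [if_neg]
      have hk' : k < ℓ + 1 := Finset.mem_range.mp hk
      omega
    · intro h'
      exact absurd (Finset.mem_range.mpr (by omega)) h'
  · rw [if_neg h]
    refine Finset.sum_eq_zero fun k hk => ?_
    rw [if_neg]
    omega

lemma cpoly_natDegree (ℓ : ℕ) : (CPoly ℓ).natDegree = ℓ := by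
  have h1 : (CPoly ℓ).coeff ℓ = 1 := by
    rw [cpoly_coeff, if_pos le_rfl, Nat.sub_self, aCoeff_zero]
  refine le_antisymm ?_ (le_natDegree_of_ne_zero (by rw [h1]; norm_num))
  rw [Polynomial.natDegree_le_iff_coeff_eq_zero]
  intro m hm
  rw [cpoly_coeff, if_neg (by omega)]

lemma cpoly_monic (ℓ : ℕ) : (CPoly ℓ).Monic := by
  rw [Polynomial.Monic, Polynomial.leadingCoeff, cpoly_natDegree, cpoly_coeff,
    if_pos le_rfl, Nat.sub_self, aCoeff_zero]
lemma sq_coeff_high (ℓ d : ℕ) (h1 : ℓ ≤ d) (h2 : d ≤ 2 * ℓ) :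
    ((CPoly ℓ) ^ 2).coeff d = bSum (2 * ℓ - d) := by
  rw [sq, Polynomial.coeff_mul, Finset.Nat.sum_antidiagonal_eq_sum_range_succ_mk]
  have hsub : Finset.Ico (d - ℓ) (ℓ + 1) ⊆ Finset.range (d + 1) := by
    intro i hi
    simp only [Finset.mem_Ico] at hi
    exact Finset.mem_range.mpr (by omega)
  have hzero : ∀ i ∈ Finset.range (d + 1), i ∉ Finset.Ico (d - ℓ) (ℓ + 1) →
      (CPoly ℓ).coeff i * (CPoly ℓ).coeff (d - i) = 0 := by
    intro i hi hni
    simp only [Finset.mem_Ico, not_and_or, not_le, not_lt] at hni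
    rcases hni with hlt | hge
    · rw [cpoly_coeff ℓ (d - i), if_neg (by omega), mul_zero]
    · rw [cpoly_coeff ℓ i, if_neg (by omega), zero_mul]
  rw [← Finset.sum_subset hsub hzero, Finset.sum_Ico_eq_sum_range]
  have hm : ℓ + 1 - (d - ℓ) = (2 * ℓ - d) + 1 := by omega
  rw [hm]
  set m := 2 * ℓ - d with hmdef
  have hstep : ∀ t ∈ Finset.range (m + 1),
      (CPoly ℓ).coeff (d - ℓ + t) * (CPoly ℓ).coeff (d - (d - ℓ + t))
        = aCoeff (m - t) * aCoeff t := by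
    intro t ht
    have ht' : t ≤ m := by have := Finset.mem_range.mp ht; omega
    rw [cpoly_coeff, cpoly_coeff, if_pos (by omega), if_pos (by omega)]
    have e1 : ℓ - (d - ℓ + t) = m - t := by omega
    have e2 : ℓ - (d - (d - ℓ + t)) = t := by omega
    rw [e1, e2]
  rw [Finset.sum_congr rfl hstep]
  have hrefl := Finset.sum_range_reflect (fun t => aCoeff t * aCoeff (m - t)) (m + 1)
  simp only [Nat.add_sub_cancel] at hrefl
  unfold bSum
  rw [← hrefl]
  refine Finset.sum_congr rfl fun t ht => ?_
  have ht' : t ≤ m := by have := Finset.mem_range.mp ht; omega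
  rw [Nat.sub_sub_self ht', mul_comm]

lemma sq_coeff_low (e : ℕ) :
    ((CPoly (e + 1)) ^ 2).coeff e = bSum (e + 2) - 2 * aCoeff (e + 2) := by
  rw [sq, Polynomial.coeff_mul, Finset.Nat.sum_antidiagonal_eq_sum_range_succ_mk]
  have hstep : ∀ i ∈ Finset.range (e + 1),
      (CPoly (e+1)).coeff i * (CPoly (e+1)).coeff (e - i)
        = aCoeff (e + 1 - i) * aCoeff (i + 1) := by
    intro i hi
    have hi' : i ≤ e := by have := Finset.mem_range.mp hi; omega
    rw [cpoly_coeff, cpoly_coeff, if_pos (by omega), if_pos (by omega)]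
    have e2 : e + 1 - (e - i) = i + 1 := by omega
    rw [e2]
  rw [Finset.sum_congr rfl hstep]
  have hb : bSum (e + 2)
      = (∑ i ∈ Finset.range (e + 1), aCoeff (i + 1) * aCoeff (e + 1 - i))
        + aCoeff 0 * aCoeff (e + 2) + aCoeff (e + 2) * aCoeff 0 := by
    unfold bSum
    rw [Finset.sum_range_succ, Finset.sum_range_succ']
    have e3 : e + 2 - (e + 2) = 0 := by omega
    rw [e3]
    congr 2
    · refine Finset.sum_congr rfl fun i hi => ?_
      congr 2
      omega
  have hc : ∑ x ∈ Finset.range (e + 1), aCoeff (e + 1 - x) * aCoeff (x + 1)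
      = ∑ i ∈ Finset.range (e + 1), aCoeff (i + 1) * aCoeff (e + 1 - i) :=
    Finset.sum_congr rfl fun i _ => mul_comm _ _
  rw [hc, hb, aCoeff_zero]
  ring

/-- The polynomial `(w-2)·C_ℓ(w)²` is monic of degree `2ℓ+1`, its coefficients of `w^d`
vanish for `ℓ+1 ≤ d ≤ 2ℓ`, and its coefficient of `w^ℓ` is `-2 a_{ℓ+1}`.  Moreover
`a_k = binom(2k,k)/2^k`. -/
theorem deformation_polynomial_identity (ℓ : ℕ) :
    (∀ k : ℕ, aCoeff k = (Nat.choose (2 * k) k : ℚ) / 2 ^ k) ∧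
    ((Polynomial.X - Polynomial.C (2 : ℚ)) * (CPoly ℓ) ^ 2).natDegree = 2 * ℓ + 1 ∧
    ((Polynomial.X - Polynomial.C (2 : ℚ)) * (CPoly ℓ) ^ 2).leadingCoeff = 1 ∧
    (∀ d : ℕ, ℓ + 1 ≤ d → d ≤ 2 * ℓ →
      ((Polynomial.X - Polynomial.C (2 : ℚ)) * (CPoly ℓ) ^ 2).coeff d = 0) ∧
    ((Polynomial.X - Polynomial.C (2 : ℚ)) * (CPoly ℓ) ^ 2).coeff ℓ
      = -2 * aCoeff (ℓ + 1) := by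
  have hmonX : (Polynomial.X - Polynomial.C (2 : ℚ)).Monic := Polynomial.monic_X_sub_C 2
  have hmonP : ((CPoly ℓ) ^ 2).Monic := (cpoly_monic ℓ).pow 2
  have hmon : ((Polynomial.X - Polynomial.C (2 : ℚ)) * (CPoly ℓ) ^ 2).Monic := hmonX.mul hmonP
  have hdegP : ((CPoly ℓ) ^ 2).natDegree = 2 * ℓ := by
    rw [(cpoly_monic ℓ).natDegree_pow, cpoly_natDegree]
  have hdeg : ((Polynomial.X - Polynomial.C (2 : ℚ)) * (CPoly ℓ) ^ 2).natDegree = 2 * ℓ + 1 := by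
    rw [hmonX.natDegree_mul hmonP, Polynomial.natDegree_X_sub_C, hdegP]
    omega
  refine ⟨aCoeff_eq, hdeg, hmon.leadingCoeff, ?_, ?_⟩
  · intro d hd1 hd2
    obtain ⟨e, rfl⟩ : ∃ e, d = e + 1 := ⟨d - 1, by omega⟩
    rw [sub_mul, Polynomial.coeff_sub, Polynomial.coeff_X_mul, Polynomial.coeff_C_mul,
      sq_coeff_high ℓ e (by omega) (by omega), sq_coeff_high ℓ (e + 1) (by omega) (by omega),
      bSum_eq, bSum_eq]
    have he : 2 * ℓ - e = (2 * ℓ - (e + 1)) + 1 := by omega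
    rw [he]
    ring
  · cases ℓ with
    | zero =>
      rw [sub_mul, Polynomial.coeff_sub, Polynomial.mul_coeff_zero, Polynomial.coeff_X_zero,
        Polynomial.coeff_C_mul, sq_coeff_high 0 0 le_rfl le_rfl, bSum_eq]
      have h1 : aCoeff 1 = 1 := by rw [aCoeff_eq]; norm_num
      rw [h1]
      norm_num
    | succ e =>
      rw [sub_mul, Polynomial.coeff_sub, Polynomial.coeff_X_mul, Polynomial.coeff_C_mul,
        sq_coeff_low e, sq_coeff_high (e + 1) (e + 1) le_rfl (by omega), bSum_eq, bSum_eq]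
      have he : 2 * (e + 1) - (e + 1) = e + 1 := by omega
      rw [he]
      have he2 : e + 1 + 1 = e + 2 := rfl
      rw [he2]
      ring

end
end
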